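/- arXiv:1710.02937 — 6 statements merged into one kernel-verified Lean document; each statement's English description precedes it below -/
import Mathlib

section
/- Let A, B be strictly positive bounded operators on a complex Hilbert space with A ≤ B and m·1 ≤ B ≤ M·1 for scalars 0 < m < M, and let p ≤ 0, q ≤ 0, α > 0. Then B^p ≤ α·A^q + β·1, where β = α(q-1)·((M^p - m^p)/(αq(M-m)))^(q/(q-1)) + (M m^p - m M^p)/(M-m) when m ≤ ((M^p - m^p)/(αq(M-m)))^(1/(q-1)) ≤ M, and β = max{ m^p - α m^q, M^p - α M^q } otherwise. -/
set_option maxHeartbeats 1000000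


open Real Set

section ScalarLemmas


lemma bern_aux {q : ℝ} (hq : q ≤ 0) {u : ℝ} (hu : 0 < u) : 1 + q * (u - 1) ≤ u ^ q := by
  rcases eq_or_lt_of_le hq with rfl | hq'
  · simp [Real.rpow_zero]
  set g : ℝ → ℝ := fun x => x ^ q - q * x with hg
  have hderiv : ∀ x : ℝ, 0 < x → HasDerivAt g (q * x ^ (q - 1) - q) x := by
    intro x hx
    have h1 := (Real.hasDerivAt_rpow_const (p := q) (Or.inl hx.ne')).sub
      ((hasDerivAt_id x).const_mul q)
    rw [mul_one] at h1; exact h1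
  have hcont : ∀ s : Set ℝ, s ⊆ Ioi 0 → ContinuousOn g s := fun s hs x hx =>
    ((hderiv x (hs hx)).continuousAt).continuousWithinAt
  have hdiff : ∀ s : Set ℝ, s ⊆ Ioi 0 → DifferentiableOn ℝ g s := fun s hs x hx =>
    ((hderiv x (hs hx)).differentiableAt).differentiableWithinAt
  have key : g 1 ≤ g u := by
    rcases le_total 1 u with h | h
    · refine monotoneOn_of_deriv_nonneg (convex_Icc 1 u)
        (hcont _ (fun x hx => lt_of_lt_of_le one_pos hx.1))
        (hdiff _ (fun x hx => lt_of_lt_of_le one_pos (interior_subset (s := Icc 1 u) hx).1))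
        (fun x hx => ?_) (left_mem_Icc.mpr h) (right_mem_Icc.mpr h) h
      rw [interior_Icc] at hx
      have hx0 : (0:ℝ) < x := lt_trans one_pos hx.1
      rw [(hderiv x hx0).deriv]
      have h1 : x ^ (q - 1) ≤ 1 := by
        have := Real.rpow_le_rpow_of_nonpos one_pos hx.1.le (by linarith : q - 1 ≤ 0)
        simpa using this
      nlinarith
    · refine antitoneOn_of_deriv_nonpos (convex_Icc u 1)
        (hcont _ (fun x hx => lt_of_lt_of_le hu hx.1))
        (hdiff _ (fun x hx => lt_of_lt_of_le hu (interior_subset (s := Icc u 1) hx).1))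
        (fun x hx => ?_) (left_mem_Icc.mpr h) (right_mem_Icc.mpr h) h
      rw [interior_Icc] at hx
      have hx0 : (0:ℝ) < x := lt_trans hu hx.1
      rw [(hderiv x hx0).deriv]
      have h1 : (1:ℝ) ≤ x ^ (q - 1) := by
        have := Real.rpow_le_rpow_of_nonpos hx0 hx.2.le (by linarith : q - 1 ≤ 0)
        simpa using this
      nlinarith
  have h1 : g 1 = 1 - q := by simp [hg]
  have hgu : g u = u ^ q - q * u := rfl
  nlinarith [key]

/-- tangent line inequality for `t ^ q`, `q ≤ 0`, at point `a > 0`. -/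
lemma tangent_rpow {q : ℝ} (hq : q ≤ 0) {a t : ℝ} (ha : 0 < a) (ht : 0 < t) :
    a ^ q + q * a ^ (q - 1) * (t - a) ≤ t ^ q := by
  have h := bern_aux hq (div_pos ht ha)
  have hdiv : (t / a) ^ q = t ^ q / a ^ q := Real.div_rpow ht.le ha.le q
  rw [hdiv] at h
  have haq : (0:ℝ) < a ^ q := Real.rpow_pos_of_pos ha q
  have hq1 : a ^ (q - 1) = a ^ q / a := by
    rw [Real.rpow_sub ha, Real.rpow_one]
  have := mul_le_mul_of_nonneg_left h haq.le
  rw [mul_div_cancel₀ _ haq.ne'] at this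
  calc a ^ q + q * a ^ (q - 1) * (t - a)
      = a ^ q * (1 + q * (t / a - 1)) := by
        rw [hq1]; field_simp
    _ ≤ t ^ q := this

lemma chord_scalar {m M p : ℝ} (hm : 0 < m) (hmM : m < M) (hp : p ≤ 0)
    {t : ℝ} (htm : m ≤ t) (htM : t ≤ M) :
    t ^ p ≤ (M ^ p - m ^ p) / (M - m) * t + (M * m ^ p - m * M ^ p) / (M - m) := by
  have hMm : (0:ℝ) < M - m := by linarith
  have ht0 : (0:ℝ) < t := lt_of_lt_of_le hm htm
  have h1 := tangent_rpow hp ht0 hm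
  have h2 := tangent_rpow hp ht0 (lt_trans hm hmM)
  have key : t ^ p * (M - m) ≤ (M ^ p - m ^ p) * t + (M * m ^ p - m * M ^ p) := by
    nlinarith [mul_le_mul_of_nonneg_left h1 (by linarith : (0:ℝ) ≤ M - t),
      mul_le_mul_of_nonneg_left h2 (by linarith : (0:ℝ) ≤ t - m)]
  have heq : (M ^ p - m ^ p) / (M - m) * t + (M * m ^ p - m * M ^ p) / (M - m)
      = ((M ^ p - m ^ p) * t + (M * m ^ p - m * M ^ p)) / (M - m) := by ring
  rw [heq, le_div_iff₀ hMm]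
  linarith

lemma scalar_main {m M p q α β : ℝ} (hm : 0 < m) (hmM : m < M) (hp : p ≤ 0) (hq : q ≤ 0)
    (hα : 0 < α)
    (hβ : β =
      if ((M ^ p - m ^ p) / (α * q * (M - m))) ^ (1 / (q - 1)) ∈ Set.Icc m M then
        α * (q - 1) * ((M ^ p - m ^ p) / (α * q * (M - m))) ^ (q / (q - 1)) +
          (M * m ^ p - m * M ^ p) / (M - m)
      else
        max (m ^ p - α * m ^ q) (M ^ p - α * M ^ q))
    {a b : ℝ} (ha : 0 < a) (hab : a ≤ b) (hmb : m ≤ b) (hbM : b ≤ M) :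
    (M ^ p - m ^ p) / (M - m) * b + (M * m ^ p - m * M ^ p) / (M - m) ≤ α * a ^ q + β := by
  have hMm : (0:ℝ) < M - m := by linarith
  set slope : ℝ := (M ^ p - m ^ p) / (M - m) with hslope_def
  set c : ℝ := (M * m ^ p - m * M ^ p) / (M - m) with hc_def
  have hMpmp : M ^ p ≤ m ^ p := Real.rpow_le_rpow_of_nonpos hm hmM.le hp
  have hslope : slope ≤ 0 := div_nonpos_of_nonpos_of_nonneg (by linarith) hMm.le
  have hchm : slope * m + c = m ^ p := by
    rw [hslope_def, hc_def]; field_simp; ring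
  have hchM : slope * M + c = M ^ p := by
    rw [hslope_def, hc_def]; field_simp; ring
  set K : ℝ := (M ^ p - m ^ p) / (α * q * (M - m)) with hK_def
  set T : ℝ := K ^ (1 / (q - 1)) with hT_def
  have hq1 : q - 1 < 0 := by linarith
  -- (★★)  h(t) ≤ β on [m,M]
  have hstar : ∀ t : ℝ, m ≤ t → t ≤ M → slope * t + c - α * t ^ q ≤ β := by
    intro t htm htM
    have ht0 : (0:ℝ) < t := lt_of_lt_of_le hm htm
    by_cases hc' : T ∈ Set.Icc m M
    · -- branch 1
      rw [hβ, if_pos hc']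
      have hq' : q < 0 := by
        rcases eq_or_lt_of_le hq with rfl | h; swap; · exact h
        exfalso
        have : T = 0 := by
          rw [hT_def, hK_def]
          norm_num [Real.zero_rpow]
        exact absurd (this ▸ hc'.1) (by linarith)
      have hMp' : M ^ p < m ^ p := by
        rcases eq_or_lt_of_le hMpmp with h | h; swap; · exact h
        exfalso
        have : T = 0 := by
          rw [hT_def, hK_def, h, sub_self, zero_div,
            Real.zero_rpow ((one_div_neg.mpr hq1).ne)]
        exact absurd (this ▸ hc'.1) (by linarith)
      have hK : 0 < K := by
        rw [hK_def]
        apply div_pos_of_neg_of_neg (by linarith)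
        have : α * q < 0 := mul_neg_of_pos_of_neg hα hq'
        nlinarith
      have hT0 : 0 < T := Real.rpow_pos_of_pos hK _
      have hTq1 : T ^ (q - 1) = K := by
        rw [hT_def, ← Real.rpow_mul hK.le, one_div_mul_cancel hq1.ne, Real.rpow_one]
      have hTq : T ^ q = K ^ (q / (q - 1)) := by
        rw [hT_def, ← Real.rpow_mul hK.le]
        congr 1
        field_simp
      have hslopeK : slope = α * q * T ^ (q - 1) := by
        have hαq : α * q ≠ 0 := (mul_neg_of_pos_of_neg hα hq').ne
        rw [hTq1, hK_def, hslope_def]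
        field_simp
        rw [mul_div_cancel_right₀ _ hq'.ne]
      have hTpow : T ^ (q - 1) * T = T ^ q := by
        have h := Real.rpow_add hT0 (q - 1) 1
        rw [Real.rpow_one] at h
        rw [← h, sub_add_cancel]
      have htan := tangent_rpow hq hT0 ht0
      have htan' : T ^ q + q * (T ^ (q - 1) * t) - q * T ^ q ≤ t ^ q := by
        rw [show q * T ^ (q-1) * (t - T) = q * (T ^ (q-1) * t) - q * (T ^ (q-1) * T) by ring,
          hTpow] at htan
        linarith
      have h3 := mul_le_mul_of_nonneg_left htan' hα.le
      rw [← hTq, hslopeK]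
      nlinarith [h3]
    · -- branch 2
      rw [hβ, if_neg hc']
      rw [Set.mem_Icc, not_and_or, not_le, not_le] at hc'
      rcases eq_or_lt_of_le hq with rfl | hq'
      · simp only [Real.rpow_zero]
        have h1 : slope * t ≤ slope * m := mul_le_mul_of_nonpos_left htm hslope
        have h2 := le_max_left (m ^ p - α * 1) (M ^ p - α * 1)
        linarith [h2, hchm]
      · rcases eq_or_lt_of_le hMpmp with heq | hMp'
        · have hsl0 : slope = 0 := by rw [hslope_def, heq, sub_self, zero_div]
          have h1 : M ^ q ≤ t ^ q := Real.rpow_le_rpow_of_nonpos ht0 htM hq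
          have h2 := le_max_right (m ^ p - α * m ^ q) (M ^ p - α * M ^ q)
          rw [hsl0] at hchM ⊢
          nlinarith
        · have hK : 0 < K := by
            rw [hK_def]
            apply div_pos_of_neg_of_neg (by linarith)
            have : α * q < 0 := mul_neg_of_pos_of_neg hα hq'
            nlinarith
          have hT0 : 0 < T := Real.rpow_pos_of_pos hK _
          have hTq1 : T ^ (q - 1) = K := by
            rw [hT_def, ← Real.rpow_mul hK.le, one_div_mul_cancel hq1.ne, Real.rpow_one]
          have hslopeK : slope = α * q * T ^ (q - 1) := by
            have hαq : α * q ≠ 0 := (mul_neg_of_pos_of_neg hα hq').ne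
            rw [hTq1, hK_def, hslope_def]
            field_simp
            rw [mul_div_cancel_right₀ _ hq'.ne]
          have hαq0 : α * q ≤ 0 := (mul_neg_of_pos_of_neg hα hq').le
          rcases hc' with hTm | hMT
          · -- T < m
            have htan := tangent_rpow hq hm ht0
            have hmono : m ^ (q - 1) ≤ T ^ (q - 1) :=
              Real.rpow_le_rpow_of_nonpos hT0 hTm.le (by linarith)
            have hsl : slope ≤ α * q * m ^ (q - 1) := by
              rw [hslopeK]
              exact mul_le_mul_of_nonpos_left hmono hαq0
            have h2 : slope * (t - m) ≤ α * q * m ^ (q - 1) * (t - m) :=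
              mul_le_mul_of_nonneg_right hsl (by linarith)
            have h3 := mul_le_mul_of_nonneg_left htan hα.le
            have h4 := le_max_left (m ^ p - α * m ^ q) (M ^ p - α * M ^ q)
            nlinarith [h2, h3, h4, hchm]
          · -- M < T
            have hM0 : (0:ℝ) < M := lt_trans hm hmM
            have htan := tangent_rpow hq hM0 ht0
            have hmono : T ^ (q - 1) ≤ M ^ (q - 1) :=
              Real.rpow_le_rpow_of_nonpos hM0 hMT.le (by linarith)
            have hsl : α * q * M ^ (q - 1) ≤ slope := by
              rw [hslopeK]
              exact mul_le_mul_of_nonpos_left hmono hαq0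
            have h2 : slope * (t - M) ≤ α * q * M ^ (q - 1) * (t - M) :=
              mul_le_mul_of_nonpos_right hsl (by linarith)
            have h3 := mul_le_mul_of_nonneg_left htan hα.le
            have h4 := le_max_right (m ^ p - α * m ^ q) (M ^ p - α * M ^ q)
            nlinarith [h2, h3, h4, hchM]
  rcases le_total m a with hma | ham
  · have haM : a ≤ M := le_trans hab hbM
    have h1 : slope * b ≤ slope * a := mul_le_mul_of_nonpos_left hab hslope
    have := hstar a hma haM
    linarith
  · have h1 : slope * b ≤ slope * m := mul_le_mul_of_nonpos_left hmb hslope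
    have h2 := hstar m le_rfl hmM.le
    have h3 : m ^ q ≤ a ^ q := Real.rpow_le_rpow_of_nonpos ha ham hq
    have h4 : α * m ^ q ≤ α * a ^ q := by nlinarith
    linarith

end ScalarLemmas

open scoped InnerProductSpace

/-- Corollary 2.2: `B^p ≤ α A^q + β 1` for `p, q ≤ 0`. -/
theorem stmt_4 {H : Type*} [NormedAddCommGroup H] [InnerProductSpace ℂ H] [CompleteSpace H]
    (A B : H →L[ℂ] H) (hA0 : 0 ≤ A) (hAu : IsUnit A) (hB0 : 0 ≤ B) (hBu : IsUnit B)
    (m M : ℝ) (hm : 0 < m) (hmM : m < M)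
    (hAB : A ≤ B) (hmB : m • (1 : H →L[ℂ] H) ≤ B) (hBM : B ≤ M • (1 : H →L[ℂ] H))
    (p q : ℝ) (hp : p ≤ 0) (hq : q ≤ 0) (α : ℝ) (hα : 0 < α) (β : ℝ)
    (hβ : β =
      if ((M ^ p - m ^ p) / (α * q * (M - m))) ^ (1 / (q - 1)) ∈ Set.Icc m M then
        α * (q - 1) * ((M ^ p - m ^ p) / (α * q * (M - m))) ^ (q / (q - 1)) +
          (M * m ^ p - m * M ^ p) / (M - m)
      else
        max (m ^ p - α * m ^ q) (M ^ p - α * M ^ q)) :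
    cfc (fun t : ℝ => t ^ p) B ≤ α • cfc (fun t : ℝ => t ^ q) A + β • (1 : H →L[ℂ] H) := by
  rcases subsingleton_or_nontrivial (H →L[ℂ] H) with hsub | hnt
  · exact le_of_eq (Subsingleton.elim _ _)
  have sA : IsSelfAdjoint A := ((ContinuousLinearMap.nonneg_iff_isPositive A).mp hA0).isSelfAdjoint
  have sB : IsSelfAdjoint B := ((ContinuousLinearMap.nonneg_iff_isPositive B).mp hB0).isSelfAdjoint
  have hσB : ∀ t ∈ spectrum ℝ B, m ≤ t ∧ t ≤ M := by
    intro t ht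
    constructor
    · exact (algebraMap_le_iff_le_spectrum (a := B) sB).mp
        (by rwa [Algebra.algebraMap_eq_smul_one]) t ht
    · exact (le_algebraMap_iff_spectrum_le (a := B) sB).mp
        (by rwa [Algebra.algebraMap_eq_smul_one]) t ht
  have hσA : ∀ t ∈ spectrum ℝ A, 0 < t := by
    intro t ht
    rcases (spectrum_nonneg_of_nonneg hA0 ht).lt_or_eq with h | h
    · exact h
    · exact absurd (h ▸ ht) (spectrum.zero_notMem_iff ℝ |>.mpr hAu)
  obtain ⟨ε, hε, hεA⟩ : ∃ ε > 0, algebraMap ℝ (H →L[ℂ] H) ε ≤ A :=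
    (CFC.exists_pos_algebraMap_le_iff sA).mpr hσA
  set slope : ℝ := (M ^ p - m ^ p) / (M - m) with hslope_def
  set c : ℝ := (M * m ^ p - m * M ^ p) / (M - m) with hc_def
  -- operator chord inequality
  have hcontp : ContinuousOn (fun t : ℝ => t ^ p) (spectrum ℝ B) := fun t ht =>
    (Real.continuousAt_rpow_const t p
      (Or.inl (lt_of_lt_of_le hm (hσB t ht).1).ne')).continuousWithinAt
  have hchordOp : cfc (fun t : ℝ => t ^ p) B ≤ slope • B + c • (1 : H →L[ℂ] H) := by
    have h1 : cfc (fun t : ℝ => t ^ p) B ≤ cfc (fun t : ℝ => slope * t + c) B :=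
      cfc_mono (fun t ht => chord_scalar hm hmM hp (hσB t ht).1 (hσB t ht).2) hcontp (by fun_prop)
    rwa [cfc_add (a := B) (fun t => slope * t) (fun _ => c) (by fun_prop) (by fun_prop),
      cfc_const_mul slope (fun t : ℝ => t) B (by fun_prop), cfc_id' (R := ℝ) (a := B) sB,
      cfc_const c B sB, Algebra.algebraMap_eq_smul_one] at h1
  have hcontq : ContinuousOn (fun t : ℝ => t ^ q) (spectrum ℝ A) := fun t ht =>
    (Real.continuousAt_rpow_const t q (Or.inl (hσA t ht).ne')).continuousWithinAt
  -- operator tangent inequality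
  have htangentOp : ∀ a : ℝ, 0 < a →
      (q * a ^ (q - 1)) • A + (a ^ q - q * a ^ (q - 1) * a) • (1 : H →L[ℂ] H) ≤
        cfc (fun t : ℝ => t ^ q) A := by
    intro a ha
    have h1 : cfc (fun t : ℝ => (q * a ^ (q - 1)) * t + (a ^ q - q * a ^ (q - 1) * a)) A ≤
        cfc (fun t : ℝ => t ^ q) A := by
      refine cfc_mono (fun t ht => ?_) (by fun_prop) hcontq
      have := tangent_rpow hq ha (hσA t ht)
      nlinarith [this]
    rwa [cfc_add (a := A) (fun t => (q * a ^ (q - 1)) * t) (fun _ => (a ^ q - q * a ^ (q - 1) * a))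
        (by fun_prop) (by fun_prop),
      cfc_const_mul (q * a ^ (q - 1)) (fun t : ℝ => t) A (by fun_prop),
      cfc_id' (R := ℝ) (a := A) sA, cfc_const _ A sA, Algebra.algebraMap_eq_smul_one] at h1
  -- pass to quadratic forms
  have inner_le : ∀ T S : H →L[ℂ] H, T ≤ S → ∀ x : H,
      RCLike.re ⟪T x, x⟫_ℂ ≤ RCLike.re ⟪S x, x⟫_ℂ := by
    intro T S h x
    have := (ContinuousLinearMap.le_def T S).mp h |>.re_inner_nonneg_left x
    simp only [ContinuousLinearMap.sub_apply, inner_sub_left, map_sub] at this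
    linarith
  have hre : ∀ (r : ℝ) (u v : H), RCLike.re ⟪r • u, v⟫_ℂ = r * RCLike.re ⟪u, v⟫_ℂ := by
    intro r u v
    rw [show r • u = (r : ℂ) • u from RCLike.real_smul_eq_coe_smul (K := ℂ) r u,
      inner_smul_left]
    simp
  rw [ContinuousLinearMap.le_def]
  constructor
  · have s1 : IsSelfAdjoint (cfc (fun t : ℝ => t ^ q) A) := cfc_predicate _ A
    have s2 : IsSelfAdjoint (cfc (fun t : ℝ => t ^ p) B) := cfc_predicate _ B
    have s3 : IsSelfAdjoint (α • cfc (fun t : ℝ => t ^ q) A) :=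
      IsSelfAdjoint.smul (star_trivial α) s1
    have s4 : IsSelfAdjoint (β • (1 : H →L[ℂ] H)) :=
      IsSelfAdjoint.smul (star_trivial β) (IsSelfAdjoint.one (R := H →L[ℂ] H))
    rw [← ContinuousLinearMap.isSelfAdjoint_iff_isSymmetric]
    exact (s3.add s4).sub s2
  · intro x
    rw [ContinuousLinearMap.reApplyInnerSelf_apply]
    by_cases hx : x = 0
    · simp [hx]
    have hN : (0:ℝ) < ‖x‖ ^ 2 := by
      have := norm_pos_iff.mpr hx
      positivity
    set N : ℝ := ‖x‖ ^ 2 with hN_def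
    set rA : ℝ := RCLike.re ⟪A x, x⟫_ℂ with hrA_def
    set rB : ℝ := RCLike.re ⟪B x, x⟫_ℂ with hrB_def
    set rQ : ℝ := RCLike.re ⟪cfc (fun t : ℝ => t ^ q) A x, x⟫_ℂ with hrQ_def
    set rP : ℝ := RCLike.re ⟪cfc (fun t : ℝ => t ^ p) B x, x⟫_ℂ with hrP_def
    have hone : RCLike.re ⟪(1 : H →L[ℂ] H) x, x⟫_ℂ = N := by
      rw [ContinuousLinearMap.one_apply, inner_self_eq_norm_sq]
    -- numeric facts
    have hrAε : ε * N ≤ rA := by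
      have := inner_le _ _ hεA x
      rwa [Algebra.algebraMap_eq_smul_one, ContinuousLinearMap.smul_apply, hre, hone] at this
    have hrAB : rA ≤ rB := inner_le _ _ hAB x
    have hrBm : m * N ≤ rB := by
      have := inner_le _ _ hmB x
      rwa [ContinuousLinearMap.smul_apply, hre, hone] at this
    have hrBM : rB ≤ M * N := by
      have := inner_le _ _ hBM x
      rwa [ContinuousLinearMap.smul_apply, hre, hone] at this
    set a : ℝ := rA / N with ha_def
    set b : ℝ := rB / N with hb_def
    have ha0 : 0 < a := div_pos (lt_of_lt_of_le (mul_pos hε hN) hrAε) hN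
    have hab : a ≤ b := (div_le_div_iff_of_pos_right hN).mpr hrAB
    have hmb : m ≤ b := (le_div_iff₀ hN).mpr (by linarith)
    have hbM : b ≤ M := (div_le_iff₀ hN).mpr (by linarith)
    have hrAa : rA = a * N := (div_mul_cancel₀ rA hN.ne').symm
    have hrBb : rB = b * N := (div_mul_cancel₀ rB hN.ne').symm
    -- chord at x
    have hchord_x : rP ≤ slope * rB + c * N := by
      have := inner_le _ _ hchordOp x
      rwa [ContinuousLinearMap.add_apply, inner_add_left, map_add,
        ContinuousLinearMap.smul_apply, hre, ContinuousLinearMap.smul_apply, hre, hone] at this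
    -- tangent at x
    have htan_x : a ^ q * N ≤ rQ := by
      have h1 := inner_le _ _ (htangentOp a ha0) x
      rw [ContinuousLinearMap.add_apply, inner_add_left, map_add,
        ContinuousLinearMap.smul_apply, hre, ContinuousLinearMap.smul_apply, hre, hone] at h1
      rw [← hrA_def, ← hrQ_def, hrAa] at h1
      nlinarith [h1]
    have hmain := scalar_main hm hmM hp hq hα hβ ha0 hab hmb hbM
    rw [← hslope_def, ← hc_def] at hmain
    -- expand goal
    have hexp : RCLike.re ⟪(α • cfc (fun t : ℝ => t ^ q) A + β • (1 : H →L[ℂ] H) -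
        cfc (fun t : ℝ => t ^ p) B) x, x⟫_ℂ = α * rQ + β * N - rP := by
      rw [ContinuousLinearMap.sub_apply, inner_sub_left, map_sub,
        ContinuousLinearMap.add_apply, inner_add_left, map_add,
        ContinuousLinearMap.smul_apply, hre, ContinuousLinearMap.smul_apply, hre, hone]
    rw [hexp]
    have hmainN := mul_le_mul_of_nonneg_right hmain hN.le
    have hq1 : α * (a ^ q * N) ≤ α * rQ := mul_le_mul_of_nonneg_left htan_x hα.le
    rw [hrBb] at hchord_x
    linarith [hchord_x, hmainN, hq1]
end

section
/- Let A, B be strictly positive bounded operators on a complex Hilbert space with A ≤ B and m·1 ≤ B ≤ M·1 for scalars 0 < m < M. Then for p ≤ 0: B^p ≤ exp( ((M·1 - B)/(M-m))·ln m^p + ((B - m·1)/(M-m))·ln M^p ) ≤ K(m,M,p)·A^p, where K(m,M,p) = (m M^p - M m^p)/((p-1)(M-m)) · ( ((p-1)/p)·(M^p - m^p)/(m M^p - M m^p) )^p is the generalized Kantorovich constant. -/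
open Real Set

private lemma bern {p x : ℝ} (hp : p ≤ 0) (hx : 0 < x) : 1 + p * (x - 1) ≤ x ^ p := by
  rw [Real.rpow_def_of_pos hx]
  have h1 : Real.log x ≤ x - 1 := Real.log_le_sub_one_of_pos hx
  have h2 : p * (x - 1) ≤ p * Real.log x := mul_le_mul_of_nonpos_left h1 hp
  have h3 := Real.add_one_le_exp (p * Real.log x)
  calc 1 + p * (x - 1) ≤ 1 + p * Real.log x := by linarith
    _ ≤ Real.exp (p * Real.log x) := by linarith
    _ = Real.exp (Real.log x * p) := by rw [mul_comm]

private lemma kmax {m M p : ℝ} (hm : 0 < m) (hmM : m < M) (hp : p < 0) {t : ℝ} (ht : 0 < t) :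
    (M ^ p - m ^ p) / (M - m) * t + (M * m ^ p - m * M ^ p) / (M - m) ≤
      ((m * M ^ p - M * m ^ p) / ((p - 1) * (M - m)) *
        (((p - 1) / p) * (M ^ p - m ^ p) / (m * M ^ p - M * m ^ p)) ^ p) * t ^ p := by
  have hMm : (0:ℝ) < M - m := sub_pos.mpr hmM
  have hM : 0 < M := hm.trans hmM
  have hmp0 : 0 < m ^ p := Real.rpow_pos_of_pos hm p
  have hMp0 : 0 < M ^ p := Real.rpow_pos_of_pos hM p
  have hMp : M ^ p < m ^ p := Real.rpow_lt_rpow_of_neg hm hmM hp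
  have hnum : m * M ^ p - M * m ^ p < 0 := by nlinarith
  set c : ℝ := ((p - 1) / p) * (M ^ p - m ^ p) / (m * M ^ p - M * m ^ p) with hc_def
  set β : ℝ := (m * M ^ p - M * m ^ p) / ((p - 1) * (M - m)) with hβ_def
  have hc : 0 < c := by
    apply div_pos_of_neg_of_neg _ hnum
    apply mul_neg_of_pos_of_neg
    · apply div_pos_of_neg_of_neg <;> linarith
    · linarith
  have hβ : 0 < β := by
    apply div_pos_of_neg_of_neg hnum
    apply mul_neg_of_neg_of_pos <;> linarith
  have key : 1 + p * (c * t - 1) ≤ (c * t) ^ p := bern hp.le (mul_pos hc ht)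
  have hmul : (c * t) ^ p = c ^ p * t ^ p := Real.mul_rpow hc.le ht.le
  have hlin : β * (1 + p * (c * t - 1)) =
      (M ^ p - m ^ p) / (M - m) * t + (M * m ^ p - m * M ^ p) / (M - m) := by
    have h1 : M - m ≠ 0 := ne_of_gt hMm
    have h2 : p ≠ 0 := hp.ne
    have h3 : p - 1 ≠ 0 := by linarith
    have h4 : m * M ^ p - M * m ^ p ≠ 0 := hnum.ne
    rw [hβ_def, hc_def]
    field_simp
    ring
  calc (M ^ p - m ^ p) / (M - m) * t + (M * m ^ p - m * M ^ p) / (M - m)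
      = β * (1 + p * (c * t - 1)) := hlin.symm
    _ ≤ β * ((c * t) ^ p) := by exact mul_le_mul_of_nonneg_left key hβ.le
    _ = (β * c ^ p) * t ^ p := by rw [hmul]; ring

private lemma chord {m M : ℝ} (hm : 0 < m) (hmM : m < M) {t : ℝ} (ht : t ∈ Set.Icc m M) :
    (M - t) / (M - m) * Real.log m + (t - m) / (M - m) * Real.log M ≤ Real.log t := by
  have hMm : (0:ℝ) < M - m := sub_pos.mpr hmM
  have hM : 0 < M := hm.trans hmM
  have w1 : (0:ℝ) ≤ (M - t) / (M - m) := div_nonneg (by linarith [ht.2]) hMm.le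
  have w2 : (0:ℝ) ≤ (t - m) / (M - m) := div_nonneg (by linarith [ht.1]) hMm.le
  have hsum : (M - t) / (M - m) + (t - m) / (M - m) = 1 := by
    rw [← add_div, div_eq_one_iff_eq hMm.ne']; ring
  have h := strictConcaveOn_log_Ioi.concaveOn.2 (Set.mem_Ioi.mpr hm) (Set.mem_Ioi.mpr hM) w1 w2 hsum
  have hcombo : (M - t) / (M - m) * m + (t - m) / (M - m) * M = t := by
    field_simp; ring
  simpa [smul_eq_mul, hcombo] using h

set_option maxHeartbeats 1000000 in
set_option synthInstance.maxHeartbeats 200000 in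
/-- `B^p ≤ exp(...) ≤ K(m,M,p) A^p` for `p ≤ 0`, with the generalized Kantorovich
constant (interpreted as `1` in the limiting case `p = 0`). -/
theorem stmt_6 {H : Type*} [NormedAddCommGroup H] [InnerProductSpace ℂ H] [CompleteSpace H]
    (A B : H →L[ℂ] H) (hA0 : 0 ≤ A) (hAu : IsUnit A) (hB0 : 0 ≤ B) (hBu : IsUnit B)
    (m M : ℝ) (hm : 0 < m) (hmM : m < M)
    (hAB : A ≤ B) (hmB : m • (1 : H →L[ℂ] H) ≤ B) (hBM : B ≤ M • (1 : H →L[ℂ] H))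
    (p : ℝ) (hp : p ≤ 0) (K : ℝ)
    (hK : K = if p = 0 then 1 else
      (m * M ^ p - M * m ^ p) / ((p - 1) * (M - m)) *
        (((p - 1) / p) * (M ^ p - m ^ p) / (m * M ^ p - M * m ^ p)) ^ p) :
    cfc (fun t : ℝ => t ^ p) B ≤
      cfc (fun t : ℝ => Real.exp (((M - t) / (M - m)) * Real.log (m ^ p) +
        ((t - m) / (M - m)) * Real.log (M ^ p))) B ∧
    cfc (fun t : ℝ => Real.exp (((M - t) / (M - m)) * Real.log (m ^ p) +
        ((t - m) / (M - m)) * Real.log (M ^ p))) B ≤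
      K • cfc (fun t : ℝ => t ^ p) A := by
  have hM : 0 < M := hm.trans hmM
  have hMm : (0:ℝ) < M - m := sub_pos.mpr hmM
  have hBsa : IsSelfAdjoint B := .of_nonneg hB0
  have hAsa : IsSelfAdjoint A := .of_nonneg hA0
  rcases hp.lt_or_eq with hneg | h0
  · -- p < 0
    have hspecB : ∀ t ∈ spectrum ℝ B, t ∈ Set.Icc m M := by
      intro t ht
      have h1 : algebraMap ℝ (H →L[ℂ] H) m ≤ B := by
        rwa [Algebra.algebraMap_eq_smul_one]
      have h2 : B ≤ algebraMap ℝ (H →L[ℂ] H) M := by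
        rwa [Algebra.algebraMap_eq_smul_one]
      exact ⟨(algebraMap_le_iff_le_spectrum hBsa).mp h1 t ht,
        (le_algebraMap_iff_spectrum_le hBsa).mp h2 t ht⟩
    have hspecA : ∀ t ∈ spectrum ℝ A, 0 < t := by
      intro t ht
      have h0' : (0:ℝ) ∉ spectrum ℝ A := spectrum.zero_notMem ℝ hAu
      exact lt_of_le_of_ne (spectrum_nonneg_of_nonneg hA0 ht) (fun h => h0' (h ▸ ht))
    have hcontB : ContinuousOn (fun t : ℝ => t ^ p) (spectrum ℝ B) := fun t ht =>
      (Real.continuousAt_rpow_const t p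
        (Or.inl (hm.trans_le (hspecB t ht).1).ne')).continuousWithinAt
    have hcontA : ContinuousOn (fun t : ℝ => t ^ p) (spectrum ℝ A) := fun t ht =>
      (Real.continuousAt_rpow_const t p (Or.inl (hspecA t ht).ne')).continuousWithinAt
    have hcontE : Continuous (fun t : ℝ => Real.exp (((M - t) / (M - m)) * Real.log (m ^ p) +
        ((t - m) / (M - m)) * Real.log (M ^ p))) := by fun_prop
    have hmp0 : 0 < m ^ p := Real.rpow_pos_of_pos hm p
    have hMp0 : 0 < M ^ p := Real.rpow_pos_of_pos hM p
    constructor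
    · refine cfc_mono (fun t ht => ?_) hcontB hcontE.continuousOn
      have htm := hspecB t ht
      have htpos : 0 < t := lt_of_lt_of_le hm htm.1
      rw [Real.rpow_def_of_pos htpos, Real.log_rpow hm, Real.log_rpow hM, Real.exp_le_exp]
      have hch := mul_le_mul_of_nonpos_left (chord hm hmM htm) hneg.le
      nlinarith [hch]
    · set a0 : ℝ := (M ^ p - m ^ p) / (M - m) with ha0
      set b0 : ℝ := (M * m ^ p - m * M ^ p) / (M - m) with hb0
      have hcontL : Continuous (fun t : ℝ => a0 * t + b0) := by fun_prop
      have step1 : cfc (fun t : ℝ => Real.exp (((M - t) / (M - m)) * Real.log (m ^ p) +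
          ((t - m) / (M - m)) * Real.log (M ^ p))) B ≤ cfc (fun t : ℝ => a0 * t + b0) B := by
        refine cfc_mono (fun t ht => ?_) hcontE.continuousOn hcontL.continuousOn
        have htm := hspecB t ht
        have w1 : (0:ℝ) ≤ (M - t) / (M - m) := div_nonneg (by linarith [htm.2]) hMm.le
        have w2 : (0:ℝ) ≤ (t - m) / (M - m) := div_nonneg (by linarith [htm.1]) hMm.le
        have hsum : (M - t) / (M - m) + (t - m) / (M - m) = 1 := by
          rw [← add_div, div_eq_one_iff_eq hMm.ne']; ring
        have key := Real.geom_mean_le_arith_mean2_weighted w1 w2 hmp0.le hMp0.le hsum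
        calc Real.exp (((M - t) / (M - m)) * Real.log (m ^ p) +
              ((t - m) / (M - m)) * Real.log (M ^ p))
            = (m ^ p) ^ ((M - t) / (M - m)) * (M ^ p) ^ ((t - m) / (M - m)) := by
              rw [Real.exp_add, Real.rpow_def_of_pos hmp0, Real.rpow_def_of_pos hMp0,
                mul_comm (Real.log (m ^ p)), mul_comm (Real.log (M ^ p))]
          _ ≤ (M - t) / (M - m) * m ^ p + (t - m) / (M - m) * M ^ p := key
          _ = a0 * t + b0 := by rw [ha0, hb0]; field_simp; ring
      have hLB : cfc (fun t : ℝ => a0 * t + b0) B = a0 • B + algebraMap ℝ (H →L[ℂ] H) b0 := by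
        rw [cfc_add_const b0 (fun t => a0 * t) B (by fun_prop) hBsa]
        congr 1
        exact cfc_const_mul_id a0 B hBsa
      have hLA : cfc (fun t : ℝ => a0 * t + b0) A = a0 • A + algebraMap ℝ (H →L[ℂ] H) b0 := by
        rw [cfc_add_const b0 (fun t => a0 * t) A (by fun_prop) hAsa]
        congr 1
        exact cfc_const_mul_id a0 A hAsa
      have hMpp : M ^ p < m ^ p := Real.rpow_lt_rpow_of_neg hm hmM hneg
      have ha0neg : a0 ≤ 0 := by
        rw [ha0]
        apply div_nonpos_of_nonpos_of_nonneg <;> linarith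
      have step2 : a0 • B ≤ a0 • A := by
        have hBA : 0 ≤ B - A := sub_nonneg.mpr hAB
        have hnn : 0 ≤ (-a0) • (B - A) := smul_nonneg (by linarith) hBA
        have heq : (-a0) • (B - A) = a0 • A - a0 • B := by
          rw [smul_sub, neg_smul, neg_smul]; abel
        rw [heq] at hnn
        exact sub_nonneg.mp hnn
      have step3 : cfc (fun t : ℝ => a0 * t + b0) A ≤ K • cfc (fun t : ℝ => t ^ p) A := by
        have hKcfc : cfc (fun t : ℝ => K * t ^ p) A = K • cfc (fun t : ℝ => t ^ p) A :=
          cfc_const_mul K (fun t : ℝ => t ^ p) A hcontA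
        rw [← hKcfc]
        refine cfc_mono (fun t ht => ?_) hcontL.continuousOn
          (continuousOn_const.mul hcontA)
        rw [hK, if_neg hneg.ne]
        exact kmax hm hmM hneg (hspecA t ht)
      calc cfc (fun t : ℝ => Real.exp (((M - t) / (M - m)) * Real.log (m ^ p) +
            ((t - m) / (M - m)) * Real.log (M ^ p))) B
          ≤ cfc (fun t : ℝ => a0 * t + b0) B := step1
        _ = a0 • B + algebraMap ℝ (H →L[ℂ] H) b0 := hLB
        _ ≤ a0 • A + algebraMap ℝ (H →L[ℂ] H) b0 := add_le_add step2 le_rfl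
        _ = cfc (fun t : ℝ => a0 * t + b0) A := hLA.symm
        _ ≤ K • cfc (fun t : ℝ => t ^ p) A := step3
  · -- p = 0
    have e1 : (fun t : ℝ => t ^ p) = fun _ : ℝ => (1:ℝ) := by
      funext t; rw [h0, Real.rpow_zero]
    have e2 : (fun t : ℝ => Real.exp (((M - t) / (M - m)) * Real.log (m ^ p) +
        ((t - m) / (M - m)) * Real.log (M ^ p))) = fun _ : ℝ => (1:ℝ) := by
      funext t; rw [h0]; simp
    rw [e1, e2, cfc_const 1 B hBsa, cfc_const 1 A hAsa, map_one, hK, if_pos h0, one_smul]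
    exact ⟨le_rfl, le_rfl⟩
end

section
/- Let A, B be strictly positive bounded operators with m·1 ≤ B ≤ M·1 for 0 < m < M and log A ≤ log B (chaotic order). Then for p ≤ 0 and -1 ≤ r ≤ 0: B^p ≤ B^(-r)·exp( ((M·1-B)/(M-m))·ln m^(p+r) + ((B-m·1)/(M-m))·ln M^(p+r) ) ≤ K(m,M,p+r)·A^p, where K(m,M,s) = (m M^s - M m^s)/((s-1)(M-m))·( ((s-1)/s)·(M^s - m^s)/(m M^s - M m^s) )^s. -/
set_option maxHeartbeats 1000000
set_option synthInstance.maxHeartbeats 200000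

private lemma core_ineq (x p δ : ℝ) (hx : 0 < x) (hp : p ≤ 0) (hδ0 : 0 ≤ δ) (hδ1 : δ ≤ 1) :
    x ^ δ * (1 + (p - δ) * (x - 1)) ≤ 1 + p * Real.log x := by
  have hb : x ^ δ ≤ 1 + δ * (x - 1) := by
    have h := Real.geom_mean_le_arith_mean2_weighted hδ0 (by linarith : (0:ℝ) ≤ 1 - δ)
      hx.le zero_le_one (by ring)
    rw [Real.one_rpow, mul_one] at h
    linarith
  have hsign : 0 ≤ (x - 1) * (x ^ δ - 1) := by
    rcases le_or_gt 1 x with h | h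
    · have : (1:ℝ) ≤ x ^ δ := Real.one_le_rpow h hδ0
      nlinarith
    · have : x ^ δ ≤ 1 := Real.rpow_le_one hx.le h.le hδ0
      nlinarith
  have hlog : Real.log x ≤ x - 1 := Real.log_le_sub_one_of_pos hx
  have hxd : 0 < x ^ δ := Real.rpow_pos_of_pos hx δ
  nlinarith [mul_nonneg (neg_nonneg.2 (sub_nonpos.2 (hp.trans hδ0) : p - δ ≤ 0)) hsign]

/-- Kantorovich-type inequality under the chaotic order (ratio type). -/
theorem stmt_11 {H : Type*} [NormedAddCommGroup H] [InnerProductSpace ℂ H] [CompleteSpace H]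
    (A B : H →L[ℂ] H) (hA0 : 0 ≤ A) (hAu : IsUnit A) (hB0 : 0 ≤ B) (hBu : IsUnit B)
    (m M : ℝ) (hm : 0 < m) (hmM : m < M)
    (hmB : m • (1 : H →L[ℂ] H) ≤ B) (hBM : B ≤ M • (1 : H →L[ℂ] H))
    (hchaos : cfc Real.log A ≤ cfc Real.log B)
    (p r : ℝ) (hp : p ≤ 0) (hr1 : -1 ≤ r) (hr0 : r ≤ 0) (K : ℝ)
    (hK : K = (m * M ^ (p + r) - M * m ^ (p + r)) / (((p + r) - 1) * (M - m)) *
      ((((p + r) - 1) / (p + r)) * (M ^ (p + r) - m ^ (p + r)) /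
        (m * M ^ (p + r) - M * m ^ (p + r))) ^ (p + r)) :
    cfc (fun t : ℝ => t ^ p) B ≤
      cfc (fun t : ℝ => t ^ (-r)) B *
        cfc (fun t : ℝ => Real.exp (((M - t) / (M - m)) * Real.log (m ^ (p + r)) +
          ((t - m) / (M - m)) * Real.log (M ^ (p + r)))) B ∧
    cfc (fun t : ℝ => t ^ (-r)) B *
        cfc (fun t : ℝ => Real.exp (((M - t) / (M - m)) * Real.log (m ^ (p + r)) +
          ((t - m) / (M - m)) * Real.log (M ^ (p + r)))) B ≤
      K • cfc (fun t : ℝ => t ^ p) A := by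
  have hBsa : IsSelfAdjoint B := hB0.isSelfAdjoint
  have hAsa : IsSelfAdjoint A := hA0.isSelfAdjoint
  have hMm : (0:ℝ) < M - m := by linarith
  have hM : (0:ℝ) < M := hm.trans hmM
  -- spectra
  have hspecBm : ∀ x ∈ spectrum ℝ B, m ≤ x := by
    have h : algebraMap ℝ (H →L[ℂ] H) m ≤ B := by rwa [Algebra.algebraMap_eq_smul_one]
    exact algebraMap_le_iff_le_spectrum (a := B) hBsa |>.mp h
  have hspecBM : ∀ x ∈ spectrum ℝ B, x ≤ M := by
    have h : B ≤ algebraMap ℝ (H →L[ℂ] H) M := by rwa [Algebra.algebraMap_eq_smul_one]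
    exact le_algebraMap_iff_spectrum_le (a := B) hBsa |>.mp h
  have hspecBpos : ∀ x ∈ spectrum ℝ B, 0 < x := fun x hx => hm.trans_le (hspecBm x hx)
  have hspecApos : ∀ x ∈ spectrum ℝ A, 0 < x := by
    intro x hx
    have h0 : 0 ≤ x := spectrum_nonneg_of_nonneg hA0 hx
    refine lt_of_le_of_ne h0 (Ne.symm fun h => ?_)
    exact (spectrum.zero_notMem_iff ℝ).mpr hAu (h ▸ hx)
  -- continuity helpers
  have hcontB_rpow : ∀ q : ℝ, ContinuousOn (fun t : ℝ => t ^ q) (spectrum ℝ B) := fun q x hx =>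
    (Real.continuousAt_rpow_const x q (Or.inl (hspecBpos x hx).ne')).continuousWithinAt
  have hcontA_rpow : ∀ q : ℝ, ContinuousOn (fun t : ℝ => t ^ q) (spectrum ℝ A) := fun q x hx =>
    (Real.continuousAt_rpow_const x q (Or.inl (hspecApos x hx).ne')).continuousWithinAt
  have hcontB_log : ContinuousOn Real.log (spectrum ℝ B) := fun x hx =>
    (Real.continuousAt_log (hspecBpos x hx).ne').continuousWithinAt
  have hcontA_log : ContinuousOn Real.log (spectrum ℝ A) := fun x hx =>
    (Real.continuousAt_log (hspecApos x hx).ne').continuousWithinAt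
  set s : ℝ := p + r with hs_def
  have hsneg : s ≤ 0 := add_nonpos hp hr0
  set E : ℝ → ℝ := fun t : ℝ => Real.exp (((M - t) / (M - m)) * Real.log (m ^ s) +
      ((t - m) / (M - m)) * Real.log (M ^ s)) with hE_def
  have hcontE : Continuous E := by fun_prop
  rcases eq_or_lt_of_le hsneg with hs0 | hs
  · -- degenerate case s = 0, hence p = 0 and r = 0
    have hpr : p + r = 0 := by rw [hs_def] at hs0; linarith
    have hp0 : p = 0 := by linarith
    have hr00 : r = 0 := by linarith
    have hK1 : K = 1 := by
      rw [hK, hs0]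
      simp only [Real.rpow_zero, mul_one]
      rw [div_eq_one_iff_eq (by intro h; nlinarith : (0 - 1) * (M - m) ≠ 0)]
      ring
    have hE1 : E = fun _ => (1:ℝ) := by
      funext t
      rw [hE_def, hs0]
      simp [Real.rpow_zero]
    have hfp : (fun t : ℝ => t ^ p) = fun _ : ℝ => (1:ℝ) := by
      funext t; rw [hp0, Real.rpow_zero]
    have hfr : (fun t : ℝ => t ^ (-r)) = fun _ : ℝ => (1:ℝ) := by
      funext t; rw [hr00, neg_zero, Real.rpow_zero]
    rw [hE1, hfp, hfr, hK1]
    have hBone : cfc (fun _ : ℝ => (1:ℝ)) B = 1 := by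
      rw [cfc_const 1 B hBsa, map_one]
    have hAone : cfc (fun _ : ℝ => (1:ℝ)) A = 1 := by
      rw [cfc_const 1 A hAsa, map_one]
    rw [hBone, hAone]
    simp
  · -- main case s < 0
    have hms : (0:ℝ) < m ^ s := Real.rpow_pos_of_pos hm s
    have hMs : (0:ℝ) < M ^ s := Real.rpow_pos_of_pos hM s
    have hsM : M ^ s < m ^ s := by
      rw [Real.rpow_def_of_pos hm, Real.rpow_def_of_pos hM]
      exact Real.exp_lt_exp.mpr (mul_lt_mul_of_neg_right (Real.log_lt_log hm hmM) hs)
    have hα' : (0:ℝ) < M * m ^ s - m * M ^ s := by nlinarith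
    obtain ⟨α, hα_def⟩ : ∃ α : ℝ, α = (M * m ^ s - m * M ^ s) / (M - m) := ⟨_, rfl⟩
    obtain ⟨β, hβ_def⟩ : ∃ β : ℝ, β = (M ^ s - m ^ s) / (M - m) := ⟨_, rfl⟩
    have hαpos : 0 < α := hα_def ▸ div_pos hα' hMm
    have hβneg : β < 0 := hβ_def ▸ div_neg_of_neg_of_pos (by linarith) hMm
    have h1s : (0:ℝ) < 1 - s := by linarith
    obtain ⟨t₀, ht₀_def⟩ : ∃ t₀ : ℝ, t₀ = s * α / ((1 - s) * β) := ⟨_, rfl⟩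
    have ht₀ : 0 < t₀ := ht₀_def ▸
      div_pos_of_neg_of_neg (mul_neg_of_neg_of_pos hs hαpos) (mul_neg_of_pos_of_neg h1s hβneg)
    obtain ⟨κ, hκ_def⟩ : ∃ κ : ℝ, κ = α / (1 - s) := ⟨_, rfl⟩
    have hκpos : 0 < κ := hκ_def ▸ div_pos hαpos h1s
    have hκα : κ * (1 - s) = α := by rw [hκ_def]; field_simp
    have hβt₀ : β * t₀ = s * κ := by
      rw [ht₀_def, hκ_def, mul_div_assoc', mul_div_assoc',
        div_eq_div_iff (mul_ne_zero h1s.ne' hβneg.ne) h1s.ne']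
      ring
    have htan : ∀ t : ℝ, α + β * t = κ * (1 + s * (t / t₀ - 1)) := by
      intro t
      have h1 : κ * (1 + s * (t / t₀ - 1)) = κ - s * κ + (β * t₀) * (t / t₀) := by
        rw [hβt₀]; ring
      rw [h1, show β * t₀ * (t / t₀) = β * (t / t₀ * t₀) by ring,
        div_mul_cancel₀ t ht₀.ne']
      linarith [hκα]
    have hαMm : α * (M - m) = M * m ^ s - m * M ^ s := by
      rw [hα_def]; field_simp
    have hβMm : β * (M - m) = M ^ s - m ^ s := by
      rw [hβ_def]; field_simp
    have hKκ : K = κ * t₀ ^ (-s) := by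
      have hfirst : (m * M ^ s - M * m ^ s) / ((s - 1) * (M - m)) = κ := by
        have h2 : m * M ^ s - M * m ^ s = -(α * (M - m)) := by rw [hαMm]; ring
        rw [h2, hκ_def, div_eq_div_iff (mul_ne_zero (by linarith) hMm.ne') (by linarith)]
        ring
      have hbase : (s - 1) / s * (M ^ s - m ^ s) / (m * M ^ s - M * m ^ s) = t₀⁻¹ := by
        have h1 : M ^ s - m ^ s = β * (M - m) := hβMm.symm
        have h2 : m * M ^ s - M * m ^ s = -(α * (M - m)) := by rw [hαMm]; ring
        have hsne : s ≠ 0 := hs.ne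
        have hane : α ≠ 0 := hαpos.ne'
        have hMmne : M - m ≠ 0 := hMm.ne'
        have hβne : β ≠ 0 := hβneg.ne
        have h1sne : (1:ℝ) - s ≠ 0 := h1s.ne'
        rw [h1, h2, ht₀_def, inv_div]
        field_simp
        ring
      rw [hK, hfirst, hbase, Real.inv_rpow ht₀.le, ← Real.rpow_neg ht₀.le]
    have hKt₀s : K * t₀ ^ s = κ := by
      rw [hKκ, mul_assoc, ← Real.rpow_add ht₀, neg_add_cancel, Real.rpow_zero, mul_one]
    have hKpos : 0 < K := by
      rw [hKκ]
      exact mul_pos hκpos (Real.rpow_pos_of_pos ht₀ _)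
    have hKt₀p_pos : 0 < K * t₀ ^ p := mul_pos hKpos (Real.rpow_pos_of_pos ht₀ p)
    obtain ⟨c, hc_def⟩ : ∃ c : ℝ, c = K * t₀ ^ p * (1 - p * Real.log t₀) := ⟨_, rfl⟩
    obtain ⟨d, hd_def⟩ : ∃ d : ℝ, d = K * t₀ ^ p * p := ⟨_, rfl⟩
    have hκt₀ : κ * t₀ ^ (-r) = K * t₀ ^ p := by
      rw [← hKt₀s, mul_assoc, ← Real.rpow_add ht₀,
        show s + -r = p by rw [hs_def]; ring]
    -- pointwise facts on [m, M]
    have hE_le_lin : ∀ x : ℝ, m ≤ x → x ≤ M → E x ≤ α + β * x := by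
      intro x hxm hxM
      obtain ⟨θ, hθ_def⟩ : ∃ θ : ℝ, θ = (M - x) / (M - m) := ⟨_, rfl⟩
      obtain ⟨θ', hθ'_def⟩ : ∃ θ' : ℝ, θ' = (x - m) / (M - m) := ⟨_, rfl⟩
      have hθ : 0 ≤ θ := by rw [hθ_def]; exact div_nonneg (by linarith) hMm.le
      have hθ' : 0 ≤ θ' := by rw [hθ'_def]; exact div_nonneg (by linarith) hMm.le
      have hθsum : θ + θ' = 1 := by rw [hθ_def, hθ'_def]; field_simp; ring
      have e1 : E x = (m ^ s) ^ θ * (M ^ s) ^ θ' := by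
        rw [hE_def, hθ_def, hθ'_def]
        rw [Real.rpow_def_of_pos hms, Real.rpow_def_of_pos hMs, ← Real.exp_add]
        simp only [Real.log_rpow hm, Real.log_rpow hM]
        congr 1
        ring
      have e2 : (m ^ s) ^ θ * (M ^ s) ^ θ' ≤ θ * m ^ s + θ' * M ^ s :=
        Real.geom_mean_le_arith_mean2_weighted hθ hθ' hms.le hMs.le hθsum
      have e3 : θ * m ^ s + θ' * M ^ s = α + β * x := by
        rw [hθ_def, hθ'_def, hα_def, hβ_def]
        field_simp
        ring
      rw [e1]
      linarith [e2, e3.symm.le]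
    have hxs_le_E : ∀ x : ℝ, m ≤ x → x ≤ M → x ^ s ≤ E x := by
      intro x hxm hxM
      have hx0 : 0 < x := hm.trans_le hxm
      obtain ⟨θ, hθ_def⟩ : ∃ θ : ℝ, θ = (M - x) / (M - m) := ⟨_, rfl⟩
      obtain ⟨θ', hθ'_def⟩ : ∃ θ' : ℝ, θ' = (x - m) / (M - m) := ⟨_, rfl⟩
      have hθ : 0 ≤ θ := by rw [hθ_def]; exact div_nonneg (by linarith) hMm.le
      have hθ' : 0 ≤ θ' := by rw [hθ'_def]; exact div_nonneg (by linarith) hMm.le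
      have hθsum : θ + θ' = 1 := by rw [hθ_def, hθ'_def]; field_simp; ring
      have hconv : θ * m + θ' * M = x := by
        rw [hθ_def, hθ'_def]; field_simp; ring
      have l1 : m ^ θ * M ^ θ' ≤ x := by
        have := Real.geom_mean_le_arith_mean2_weighted hθ hθ' hm.le hM.le hθsum
        rwa [hconv] at this
      have l2 : θ * Real.log m + θ' * Real.log M ≤ Real.log x := by
        have hl : Real.log (m ^ θ * M ^ θ') ≤ Real.log x :=
          Real.log_le_log (by positivity) l1
        rwa [Real.log_mul (by positivity) (by positivity), Real.log_rpow hm,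
          Real.log_rpow hM] at hl
      have l3 : s * Real.log x ≤ s * (θ * Real.log m + θ' * Real.log M) :=
        mul_le_mul_of_nonpos_left l2 hsneg
      simp only [hE_def]
      rw [Real.rpow_def_of_pos hx0, Real.log_rpow hm, Real.log_rpow hM,
        ← hθ_def, ← hθ'_def]
      apply Real.exp_le_exp.mpr
      nlinarith [l3]
    -- key pointwise inequality 1
    have hKEY1 : ∀ x ∈ spectrum ℝ B, x ^ p ≤ x ^ (-r) * E x := by
      intro x hx
      have hx0 : 0 < x := hspecBpos x hx
      have hsplit : x ^ p = x ^ (-r) * x ^ s := by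
        rw [← Real.rpow_add hx0, show -r + s = p by rw [hs_def]; ring]
      rw [hsplit]
      exact mul_le_mul_of_nonneg_left (hxs_le_E x (hspecBm x hx) (hspecBM x hx))
        (Real.rpow_nonneg hx0.le _)
    -- key pointwise inequality 2
    have hKEY2 : ∀ x ∈ spectrum ℝ B, x ^ (-r) * E x ≤ c + d * Real.log x := by
      intro x hx
      have hx0 : 0 < x := hspecBpos x hx
      have hy : 0 < x / t₀ := div_pos hx0 ht₀
      have c1 : x ^ (-r) * E x ≤ x ^ (-r) * (α + β * x) :=
        mul_le_mul_of_nonneg_left (hE_le_lin x (hspecBm x hx) (hspecBM x hx))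
          (Real.rpow_nonneg hx0.le _)
      have hxfact : x ^ (-r) = t₀ ^ (-r) * (x / t₀) ^ (-r) := by
        rw [← Real.mul_rpow ht₀.le hy.le, mul_div_cancel₀ x ht₀.ne']
      have c2 : x ^ (-r) * (α + β * x) =
          (K * t₀ ^ p) * ((x / t₀) ^ (-r) * (1 + s * (x / t₀ - 1))) := by
        rw [htan x, hxfact, ← hκt₀]
        ring
      have c3 : (x / t₀) ^ (-r) * (1 + s * (x / t₀ - 1)) ≤ 1 + p * Real.log (x / t₀) := by
        have h := core_ineq (x / t₀) p (-r) hy hp (by linarith) (by linarith)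
        rwa [show p - -r = s by rw [hs_def]; ring] at h
      have c4 : (K * t₀ ^ p) * (1 + p * Real.log (x / t₀)) = c + d * Real.log x := by
        rw [Real.log_div hx0.ne' ht₀.ne', hc_def, hd_def]
        ring
      calc x ^ (-r) * E x ≤ x ^ (-r) * (α + β * x) := c1
        _ = (K * t₀ ^ p) * ((x / t₀) ^ (-r) * (1 + s * (x / t₀ - 1))) := c2
        _ ≤ (K * t₀ ^ p) * (1 + p * Real.log (x / t₀)) :=
            mul_le_mul_of_nonneg_left c3 hKt₀p_pos.le
        _ = c + d * Real.log x := c4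
    -- key pointwise inequality 3
    have hKEY3 : ∀ x ∈ spectrum ℝ A, c + d * Real.log x ≤ K * x ^ p := by
      intro x hx
      have hx0 : 0 < x := hspecApos x hx
      have k1 : c + d * Real.log x =
          (K * t₀ ^ p) * (1 + p * (Real.log x - Real.log t₀)) := by
        rw [hc_def, hd_def]; ring
      have k2 : 1 + p * (Real.log x - Real.log t₀) ≤
          Real.exp (p * (Real.log x - Real.log t₀)) := by
        have := Real.add_one_le_exp (p * (Real.log x - Real.log t₀))
        linarith
      have k3 : (K * t₀ ^ p) * Real.exp (p * (Real.log x - Real.log t₀)) = K * x ^ p := by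
        rw [Real.rpow_def_of_pos ht₀ p, Real.rpow_def_of_pos hx0 p, mul_assoc,
          ← Real.exp_add]
        congr 1
        congr 1
        ring
      rw [k1, ← k3]
      exact mul_le_mul_of_nonneg_left k2 hKt₀p_pos.le
    -- operator assembly
    have hmulE : cfc (fun t : ℝ => t ^ (-r) * E t) B =
        cfc (fun t : ℝ => t ^ (-r)) B * cfc E B :=
      cfc_mul _ _ B (hcontB_rpow (-r)) hcontE.continuousOn
    have h1 : cfc (fun t : ℝ => t ^ p) B ≤ cfc (fun t : ℝ => t ^ (-r) * E t) B :=
      cfc_mono hKEY1 (hcontB_rpow p) ((hcontB_rpow (-r)).mul hcontE.continuousOn)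
    have h3 : cfc (fun t : ℝ => t ^ (-r) * E t) B ≤ cfc (fun t : ℝ => c + d * Real.log t) B :=
      cfc_mono hKEY2 ((hcontB_rpow (-r)).mul hcontE.continuousOn)
        (continuousOn_const.add (continuousOn_const.mul hcontB_log))
    have h4 : cfc (fun t : ℝ => c + d * Real.log t) B =
        algebraMap ℝ (H →L[ℂ] H) c + d • cfc Real.log B := by
      rw [cfc_const_add c (fun t => d * Real.log t) B
        (continuousOn_const.mul hcontB_log) hBsa, cfc_const_mul d Real.log B hcontB_log]
    have h7 : cfc (fun t : ℝ => c + d * Real.log t) A =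
        algebraMap ℝ (H →L[ℂ] H) c + d • cfc Real.log A := by
      rw [cfc_const_add c (fun t => d * Real.log t) A
        (continuousOn_const.mul hcontA_log) hAsa, cfc_const_mul d Real.log A hcontA_log]
    have h5 : d • cfc Real.log B ≤ d • cfc Real.log A := by
      have hd0 : d ≤ 0 := by
        rw [hd_def]; exact mul_nonpos_of_nonneg_of_nonpos hKt₀p_pos.le hp
      have hsub : 0 ≤ cfc Real.log B - cfc Real.log A := sub_nonneg.mpr hchaos
      have hB' : IsSelfAdjoint (cfc Real.log B) := cfc_predicate Real.log B
      have hA' : IsSelfAdjoint (cfc Real.log A) := cfc_predicate Real.log A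
      have hsubsa : IsSelfAdjoint (cfc Real.log B - cfc Real.log A) := hB'.sub hA' 
      have hnn : 0 ≤ (-d) • (cfc Real.log B - cfc Real.log A) := by
        rw [← cfc_const_mul_id (-d) _ hsubsa]
        exact cfc_nonneg fun x hx => mul_nonneg (by linarith)
          (spectrum_nonneg_of_nonneg hsub hx)
      have heq : (-d) • (cfc Real.log B - cfc Real.log A) =
          d • cfc Real.log A - d • cfc Real.log B := by
        rw [neg_smul, smul_sub, neg_sub]
      rw [heq] at hnn
      exact sub_nonneg.mp hnn
    have h6 : algebraMap ℝ (H →L[ℂ] H) c + d • cfc Real.log B ≤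
        algebraMap ℝ (H →L[ℂ] H) c + d • cfc Real.log A := add_le_add le_rfl h5
    have h8 : cfc (fun t : ℝ => c + d * Real.log t) A ≤ cfc (fun t : ℝ => K * t ^ p) A :=
      cfc_mono hKEY3 (continuousOn_const.add (continuousOn_const.mul hcontA_log))
        (continuousOn_const.mul (hcontA_rpow p))
    have h9 : cfc (fun t : ℝ => K * t ^ p) A = K • cfc (fun t : ℝ => t ^ p) A :=
      cfc_const_mul K _ A (hcontA_rpow p)
    constructor
    · rw [← hmulE]
      exact h1
    · calc cfc (fun t : ℝ => t ^ (-r)) B * cfc E B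
          = cfc (fun t : ℝ => t ^ (-r) * E t) B := hmulE.symm
        _ ≤ cfc (fun t : ℝ => c + d * Real.log t) B := h3
        _ = algebraMap ℝ (H →L[ℂ] H) c + d • cfc Real.log B := h4
        _ ≤ algebraMap ℝ (H →L[ℂ] H) c + d • cfc Real.log A := h6
        _ = cfc (fun t : ℝ => c + d * Real.log t) A := h7.symm
        _ ≤ cfc (fun t : ℝ => K * t ^ p) A := h8
        _ = K • cfc (fun t : ℝ => t ^ p) A := h9
end

section
/- Let Φ₁,…,Φₙ be normalized (unital) positive linear maps from B(𝓗) to B(𝓚), A₁,…,Aₙ self-adjoint operators with m·1 ≤ Aᵢ ≤ M·1 (m < M), and w₁,…,wₙ ≥ 0 with Σwᵢ = 1. If f : [m,M] → (0,∞) is log-convex and g is continuous on [m,M], then for any α ∈ ℝ: Σᵢ wᵢ Φᵢ(f(Aᵢ)) ≤ Σᵢ wᵢ Φᵢ( exp( ((M·1-Aᵢ)/(M-m))·ln f(m) + ((Aᵢ-m·1)/(M-m))·ln f(M) ) ) ≤ α·g( Σᵢ wᵢ Φᵢ(Aᵢ) ) + β·1, where β = max_{m ≤ t ≤ M} { a_f·t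 + b_f - α·g(t) }, a_f = (f(M)-f(m))/(M-m), b_f = (M f(m) - m f(M))/(M-m). -/
section Aux

variable {E : Type*} [NormedAddCommGroup E] [InnerProductSpace ℂ E] [CompleteSpace E]

set_option synthInstance.maxHeartbeats 1000000 in
private lemma aux_smul_le_smul {w : ℝ} (hw : 0 ≤ w) {X Y : E →L[ℂ] E} (h : X ≤ Y) :
    w • X ≤ w • Y := smul_le_smul_of_nonneg_left h hw

private lemma aux_cfc_affine (a b : ℝ) (X : E →L[ℂ] E) (hX : IsSelfAdjoint X) :
    cfc (fun t : ℝ => a * t + b) X = a • X + b • 1 := by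
  rw [cfc_add .., cfc_const_mul .., cfc_id' ℝ X, cfc_const ..]
  simp [Algebra.algebraMap_eq_smul_one]

private lemma aux_spectrum_subset_Icc {X : E →L[ℂ] E} (hX : IsSelfAdjoint X) {m M : ℝ}
    (h1 : m • (1 : E →L[ℂ] E) ≤ X) (h2 : X ≤ M • (1 : E →L[ℂ] E)) :
    spectrum ℝ X ⊆ Set.Icc m M := by
  intro x hx
  exact ⟨(algebraMap_le_iff_le_spectrum (R := ℝ) (r := m) (a := X) hX).mp
      (by simpa [Algebra.algebraMap_eq_smul_one] using h1) x hx,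
    (le_algebraMap_iff_spectrum_le (R := ℝ) (r := M) (a := X) hX).mp
      (by simpa [Algebra.algebraMap_eq_smul_one] using h2) x hx⟩

end Aux

set_option maxHeartbeats 2000000 in
set_option synthInstance.maxHeartbeats 400000 in
/-- Multiple-operator Mond–Pečarić type reverse inequality for log-convex functions. -/
theorem stmt_13 {H K : Type*}
    [NormedAddCommGroup H] [InnerProductSpace ℂ H] [CompleteSpace H]
    [NormedAddCommGroup K] [InnerProductSpace ℂ K] [CompleteSpace K]
    (n : ℕ) (Φ : Fin n → ((H →L[ℂ] H) →ₗ[ℂ] (K →L[ℂ] K)))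
    (hΦpos : ∀ i, ∀ T : H →L[ℂ] H, 0 ≤ T → 0 ≤ Φ i T)
    (hΦunital : ∀ i, Φ i 1 = 1)
    (A : Fin n → (H →L[ℂ] H)) (hAsa : ∀ i, IsSelfAdjoint (A i))
    (m M : ℝ) (hmM : m < M)
    (hmA : ∀ i, m • (1 : H →L[ℂ] H) ≤ A i) (hAM : ∀ i, A i ≤ M • (1 : H →L[ℂ] H))
    (w : Fin n → ℝ) (hw : ∀ i, 0 ≤ w i) (hw1 : ∑ i, w i = 1)
    (f : ℝ → ℝ) (hfpos : ∀ x ∈ Set.Icc m M, 0 < f x)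
    (hlc : ∀ x ∈ Set.Icc m M, ∀ y ∈ Set.Icc m M, ∀ v ∈ Set.Icc (0 : ℝ) 1,
      f ((1 - v) * x + v * y) ≤ f x ^ (1 - v) * f y ^ v)
    (g : ℝ → ℝ) (hg : ContinuousOn g (Set.Icc m M))
    (α : ℝ) (β : ℝ)
    (hβ : IsGreatest ((fun t => ((f M - f m) / (M - m)) * t +
      (M * f m - m * f M) / (M - m) - α * g t) '' Set.Icc m M) β) :
    (∑ i, w i • Φ i (cfc f (A i))) ≤
      (∑ i, w i • Φ i (cfc (fun t : ℝ => Real.exp (((M - t) / (M - m)) * Real.log (f m) +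
        ((t - m) / (M - m)) * Real.log (f M))) (A i))) ∧
    (∑ i, w i • Φ i (cfc (fun t : ℝ => Real.exp (((M - t) / (M - m)) * Real.log (f m) +
        ((t - m) / (M - m)) * Real.log (f M))) (A i))) ≤
      α • cfc g (∑ i, w i • Φ i (A i)) + β • (1 : K →L[ℂ] K) := by
  have hMm : (0:ℝ) < M - m := sub_pos.mpr hmM
  have hfm : 0 < f m := hfpos m ⟨le_refl m, hmM.le⟩
  have hfM : 0 < f M := hfpos M ⟨hmM.le, le_refl M⟩
  set af : ℝ := (f M - f m) / (M - m) with haf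
  set bf : ℝ := (M * f m - m * f M) / (M - m) with hbf
  set hfun : ℝ → ℝ := fun t : ℝ => Real.exp (((M - t) / (M - m)) * Real.log (f m) +
    ((t - m) / (M - m)) * Real.log (f M)) with hhfun
  have hcont : Continuous hfun := by
    rw [hhfun]
    exact Real.continuous_exp.comp
      ((((continuous_const.sub continuous_id).div_const _).mul continuous_const).add
        (((continuous_id.sub continuous_const).div_const _).mul continuous_const))
  -- representation of hfun as weighted geometric mean
  have hrepr : ∀ t : ℝ, hfun t = f m ^ ((M - t)/(M - m)) * f M ^ ((t - m)/(M - m)) := by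
    intro t
    simp only [hhfun]
    rw [Real.rpow_def_of_pos hfm, Real.rpow_def_of_pos hfM, ← Real.exp_add]
    congr 1
    ring
  -- pointwise inequality 1
  have h1 : ∀ t ∈ Set.Icc m M, f t ≤ hfun t := by
    intro t ht
    set v : ℝ := (t - m)/(M - m) with hv
    have hv0 : 0 ≤ v := div_nonneg (by linarith [ht.1]) hMm.le
    have hv1 : v ≤ 1 := (div_le_one hMm).mpr (by linarith [ht.2])
    have hvm : v * (M - m) = t - m := div_mul_cancel₀ _ hMm.ne'
    have h1v : 1 - v = (M - t)/(M - m) := by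
      rw [hv]; field_simp; ring
    have hteq : (1 - v) * m + v * M = t := by
      have h' : (1 - v) * m + v * M = m + v * (M - m) := by ring
      rw [h', hvm]; ring
    have hle := hlc m (Set.left_mem_Icc.mpr hmM.le) M (Set.right_mem_Icc.mpr hmM.le)
      v ⟨hv0, hv1⟩
    rw [hteq] at hle
    calc f t ≤ f m ^ (1 - v) * f M ^ v := hle
      _ = hfun t := by rw [hrepr t, h1v]
  -- pointwise inequality 2 (AM-GM)
  have h2 : ∀ t ∈ Set.Icc m M, hfun t ≤ af * t + bf := by
    intro t ht
    set v : ℝ := (t - m)/(M - m) with hv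
    have hv0 : 0 ≤ v := div_nonneg (by linarith [ht.1]) hMm.le
    have hv1 : v ≤ 1 := (div_le_one hMm).mpr (by linarith [ht.2])
    have h1v : 1 - v = (M - t)/(M - m) := by
      rw [hv]; field_simp; ring
    have hgm := Real.geom_mean_le_arith_mean2_weighted (by linarith : (0:ℝ) ≤ 1 - v)
      hv0 hfm.le hfM.le (by ring)
    calc hfun t = f m ^ (1 - v) * f M ^ v := by rw [hrepr t, h1v]
      _ ≤ (1 - v) * f m + v * f M := hgm
      _ = af * t + bf := by
          rw [haf, hbf, hv]
          field_simp
          ring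
  -- pointwise inequality 3
  have h3 : ∀ t ∈ Set.Icc m M, af * t + bf ≤ α * g t + β := by
    intro t ht
    have := hβ.2 (Set.mem_image_of_mem _ ht)
    linarith
  -- spectra of the A i
  have hspec : ∀ i, spectrum ℝ (A i) ⊆ Set.Icc m M :=
    fun i => aux_spectrum_subset_Icc (hAsa i) (hmA i) (hAM i)
  -- monotonicity of the Φ i
  have hmono : ∀ i, ∀ {X Y : H →L[ℂ] H}, X ≤ Y → Φ i X ≤ Φ i Y := by
    intro i X Y hXY
    have h0 := hΦpos i (Y - X) (sub_nonneg.mpr hXY)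
    rw [map_sub] at h0
    exact sub_nonneg.mp h0
  -- first inequality, operator level
  have key1 : ∀ i, cfc f (A i) ≤ cfc hfun (A i) := by
    intro i
    by_cases hfc : ContinuousOn f (spectrum ℝ (A i))
    · rw [cfc_le_iff f hfun (A i) hfc hcont.continuousOn (hAsa i)]
      exact fun x hx => h1 x (hspec i hx)
    · rw [cfc_apply_of_not_continuousOn (A i) hfc]
      exact cfc_nonneg fun x _ => (Real.exp_pos _).le
  have ineq1 : (∑ i, w i • Φ i (cfc f (A i))) ≤ ∑ i, w i • Φ i (cfc hfun (A i)) :=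
    Finset.sum_le_sum fun i _ => aux_smul_le_smul (hw i) (hmono i (key1 i))
  -- second part
  set S : K →L[ℂ] K := ∑ i, w i • Φ i (A i) with hS
  have hbound : ∀ i, m • (1 : K →L[ℂ] K) ≤ Φ i (A i) ∧ Φ i (A i) ≤ M • 1 := by
    intro i
    constructor
    · have := hmono i (hmA i)
      rwa [(Φ i).map_smul_of_tower, hΦunital i] at this
    · have := hmono i (hAM i)
      rwa [(Φ i).map_smul_of_tower, hΦunital i] at this
  have hSA : ∀ i, IsSelfAdjoint (Φ i (A i)) := by
    intro i
    have h0 : (0 : K →L[ℂ] K) ≤ Φ i (A i - m • 1) :=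
      hΦpos i _ (sub_nonneg.mpr (hmA i))
    have hsa := IsSelfAdjoint.of_nonneg h0
    rw [map_sub, (Φ i).map_smul_of_tower, hΦunital i] at hsa
    have := hsa.add ((show IsSelfAdjoint m from star_trivial m).smul
      (IsSelfAdjoint.one (K →L[ℂ] K)))
    simpa using this
  have hSsa : IsSelfAdjoint S := by
    rw [hS, IsSelfAdjoint, star_sum]
    exact Finset.sum_congr rfl fun i _ =>
      ((show IsSelfAdjoint (w i) from star_trivial (w i)).smul (hSA i)).star_eq
  have hmS : m • (1 : K →L[ℂ] K) ≤ S := by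
    calc m • (1 : K →L[ℂ] K) = ∑ i, w i • (m • (1 : K →L[ℂ] K)) := by
          rw [← Finset.sum_smul, hw1, one_smul]
      _ ≤ S := Finset.sum_le_sum fun i _ => aux_smul_le_smul (hw i) (hbound i).1
  have hSM : S ≤ M • (1 : K →L[ℂ] K) := by
    calc S ≤ ∑ i, w i • (M • (1 : K →L[ℂ] K)) :=
          Finset.sum_le_sum fun i _ => aux_smul_le_smul (hw i) (hbound i).2
      _ = M • 1 := by rw [← Finset.sum_smul, hw1, one_smul]
  have hspecS : spectrum ℝ S ⊆ Set.Icc m M := aux_spectrum_subset_Icc hSsa hmS hSM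
  -- step: Φ i (cfc hfun (A i)) ≤ af • Φ i (A i) + bf • 1
  have step2 : ∀ i, Φ i (cfc hfun (A i)) ≤ af • Φ i (A i) + bf • 1 := by
    intro i
    have hle : cfc hfun (A i) ≤ af • A i + bf • 1 := by
      rw [← aux_cfc_affine af bf (A i) (hAsa i)]
      rw [cfc_le_iff hfun (fun t => af * t + bf) (A i) hcont.continuousOn
        (Continuous.continuousOn
          (by exact (continuous_const.mul continuous_id').add continuous_const)) (hAsa i)]
      exact fun x hx => h2 x (hspec i hx)
    have := hmono i hle
    rwa [map_add, (Φ i).map_smul_of_tower, (Φ i).map_smul_of_tower, hΦunital i] at this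
  have sum2 : (∑ i, w i • Φ i (cfc hfun (A i))) ≤ af • S + bf • 1 := by
    have hle : (∑ i, w i • Φ i (cfc hfun (A i))) ≤
        ∑ i, w i • (af • Φ i (A i) + bf • (1 : K →L[ℂ] K)) :=
      Finset.sum_le_sum fun i _ => aux_smul_le_smul (hw i) (step2 i)
    refine hle.trans_eq ?_
    simp only [smul_add, smul_smul]
    rw [Finset.sum_add_distrib, ← Finset.sum_smul, ← Finset.sum_mul, hw1, one_mul, hS,
      Finset.smul_sum]
    congr 1
    exact Finset.sum_congr rfl fun i _ => by rw [smul_smul, mul_comm]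
  have final : af • S + bf • 1 ≤ α • cfc g S + β • 1 := by
    have hgc : ContinuousOn g (spectrum ℝ S) := hg.mono hspecS
    have e2 : cfc (fun t : ℝ => α * g t + β) S = α • cfc g S + β • 1 := by
      rw [cfc_add S (fun t => α * g t) (fun _ => β) (continuousOn_const.mul hgc)
        continuousOn_const, cfc_const_mul α g S hgc, cfc_const β S hSsa]
      simp [Algebra.algebraMap_eq_smul_one]
    rw [← aux_cfc_affine af bf S hSsa, ← e2]
    rw [cfc_le_iff (fun t => af * t + bf) (fun t => α * g t + β) S
      (Continuous.continuousOn
        (by exact (continuous_const.mul continuous_id').add continuous_const))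
      ((continuousOn_const.mul hgc).add continuousOn_const) hSsa]
    exact fun x hx => h3 x (hspecS hx)
  exact ⟨ineq1, sum2.trans final⟩
end

section
/- Let Φ be a unital positive linear map from B(𝓗) to B(𝓚), and A, B strictly positive operators with mA ≤ B ≤ MA for 0 < m < M, and p ≤ 0. Then Φ(A ♯_p B) ≤ Φ( A^(1/2)·exp( ((M·1 - A^(-1/2)BA^(-1/2))/(M-m))·ln m^p + ((A^(-1/2)BA^(-1/2) - m·1)/(M-m))·ln M^p )·A^(1/2) ) ≤ K(m,M,p)·(Φ(A) ♯_p Φ(B)), where K(m,M,p) = (m M^p - M m^p)/((p-1)(M-m))·( ((p-1)/p)·(M^p - m^p)/(m M^p - M m^p) )^p. -/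
set_option linter.unusedSectionVars false
set_option linter.unusedVariables false

section ScalarAux

/-- Bernoulli's inequality for nonpositive real exponents. -/
lemma bernoulli_nonpos {x p : ℝ} (hx : 0 < x) (hp : p ≤ 0) :
    1 + p * (x - 1) ≤ x ^ p := by
  have hxi : 0 < 1/x := by positivity
  have hs : (-1:ℝ) ≤ 1/x - 1 := by linarith
  have hr : (1:ℝ) ≤ 1 - p := by linarith
  have h := one_add_mul_self_le_rpow_one_add hs hr
  rw [add_sub_cancel] at h
  have hxp : (1/x : ℝ) ^ (1 - p) = x ^ (p - 1) := by
    rw [one_div, ← Real.rpow_neg_one x, ← Real.rpow_mul hx.le]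
    congr 1; ring
  rw [hxp] at h
  calc 1 + p * (x - 1) = x * (1 + (1 - p) * (1/x - 1)) := by field_simp; ring
    _ ≤ x * x ^ (p - 1) := mul_le_mul_of_nonneg_left h hx.le
    _ = x ^ p := by
        nth_rewrite 1 [← Real.rpow_one x]
        rw [← Real.rpow_add hx]; norm_num

lemma scalar_key {m M p Kc : ℝ} (hm : 0 < m) (hmM : m < M) (hp : p ≤ 0)
    (hK : Kc = (m * M ^ p - M * m ^ p) / ((p - 1) * (M - m)) *
      (((p - 1) / p) * (M ^ p - m ^ p) / (m * M ^ p - M * m ^ p)) ^ p) :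
    ∃ μ ν : ℝ, ∀ t ∈ Set.Icc m M,
      (t ^ p ≤ Real.exp (((M - t) / (M - m)) * Real.log (m ^ p) +
        ((t - m) / (M - m)) * Real.log (M ^ p)) ∧
       Real.exp (((M - t) / (M - m)) * Real.log (m ^ p) +
        ((t - m) / (M - m)) * Real.log (M ^ p)) ≤ μ * t + ν ∧
       μ * t + ν ≤ Kc * t ^ p) := by
  have hMm : (0:ℝ) < M - m := by linarith
  have hM : (0:ℝ) < M := hm.trans hmM
  rcases eq_or_lt_of_le hp with rfl | hp'
  · -- p = 0
    refine ⟨0, 1, fun t ht => ?_⟩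
    have hKc : Kc = 1 := by
      rw [hK]
      simp only [Real.rpow_zero]
      field_simp
      ring
    simp only [Real.rpow_zero, Real.log_one, hKc]
    norm_num
  · -- p < 0
    set mp := m ^ p with hmp
    set Mp := M ^ p with hMp
    have hmp0 : 0 < mp := Real.rpow_pos_of_pos hm p
    have hMp0 : 0 < Mp := Real.rpow_pos_of_pos hM p
    have hplt : Mp < mp := Real.rpow_lt_rpow_of_neg hm hmM hp'
    have hD1 : m * Mp - M * mp < 0 := by nlinarith
    have hD2 : Mp - mp < 0 := by linarith
    have hp1 : p - 1 < 0 := by linarith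
    set C := (m * Mp - M * mp) / ((p - 1) * (M - m)) with hC
    set s := ((p - 1) / p) * (Mp - mp) / (m * Mp - M * mp) with hs
    have hC0 : 0 < C := by
      apply div_pos_of_neg_of_neg hD1
      nlinarith
    have hs0 : 0 < s := by
      rw [hs]
      apply div_pos_of_neg_of_neg _ hD1
      have : 0 < (p - 1) / p := div_pos_of_neg_of_neg hp1 hp'
      nlinarith
    have hKC : Kc = C * s ^ p := hK
    refine ⟨C * p * s, C * (1 - p), fun t ht => ?_⟩
    obtain ⟨htm, htM⟩ := ht
    have ht0 : 0 < t := lt_of_lt_of_le hm htm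
    set α := (M - t) / (M - m) with hα
    set β := (t - m) / (M - m) with hβ
    have hα0 : 0 ≤ α := by
      apply div_nonneg _ hMm.le; linarith
    have hβ0 : 0 ≤ β := by
      apply div_nonneg _ hMm.le; linarith
    have hαβ : α + β = 1 := by
      rw [hα, hβ, ← add_div, div_eq_one_iff_eq hMm.ne']; ring
    have h1 : p ≠ 0 := hp'.ne
    have h2 : p - 1 ≠ 0 := hp1.ne
    have h3 : m * Mp - M * mp ≠ 0 := hD1.ne
    have h4 : M - m ≠ 0 := hMm.ne'
    have hCps : C * p * s = (Mp - mp) / (M - m) := by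
      rw [hC, hs]; field_simp
    have hC1p : C * (1 - p) = (M * mp - m * Mp) / (M - m) := by
      rw [hC]; field_simp; ring
    have hlin : α * mp + β * Mp = C * p * s * t + C * (1 - p) := by
      rw [hCps, hC1p, hα, hβ]
      field_simp
      ring
    refine ⟨?_, ?_, ?_⟩
    · rw [Real.rpow_def_of_pos ht0, hmp, hMp, Real.log_rpow hm, Real.log_rpow hM]
      apply Real.exp_le_exp.mpr
      have hcon := strictConcaveOn_log_Ioi.concaveOn.2 (Set.mem_Ioi.mpr hm)
        (Set.mem_Ioi.mpr hM) hα0 hβ0 hαβ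
      have ht' : α * m + β * M = t := by rw [hα, hβ]; field_simp; ring
      simp only [smul_eq_mul, ht'] at hcon
      calc Real.log t * p = p * Real.log t := by ring
        _ ≤ p * (α * Real.log m + β * Real.log M) := by
            apply mul_le_mul_of_nonpos_left hcon hp
        _ = α * (p * Real.log m) + β * (p * Real.log M) := by ring
    · rw [← hlin]
      have : Real.exp (α * Real.log mp + β * Real.log Mp) = mp ^ α * Mp ^ β := by
        rw [Real.exp_add, Real.rpow_def_of_pos hmp0, Real.rpow_def_of_pos hMp0]
        ring_nf
      rw [this]
      exact Real.geom_mean_le_arith_mean2_weighted hα0 hβ0 hmp0.le hMp0.le hαβ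
    · have hst : 0 < s * t := by positivity
      have hbern := bernoulli_nonpos hst hp
      calc C * p * s * t + C * (1 - p) = C * (1 + p * (s * t - 1)) := by ring
        _ ≤ C * (s * t) ^ p := mul_le_mul_of_nonneg_left hbern hC0.le
        _ = Kc * t ^ p := by
            rw [Real.mul_rpow hs0.le ht0.le, hKC]; ring

end ScalarAux

section OperatorAux

variable {E : Type*} [CStarAlgebra E] [PartialOrder E] [StarOrderedRing E]

lemma contOn_rpow {S : Set ℝ} (hS : ∀ x ∈ S, 0 < x) (c : ℝ) :
    ContinuousOn (fun t : ℝ => t ^ c) S := fun x hx =>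
  (Real.continuousAt_rpow_const x c (Or.inl (hS x hx).ne')).continuousWithinAt

lemma spec_pos {A : E} (hA0 : 0 ≤ A) (hAu : IsUnit A) : ∀ x ∈ spectrum ℝ A, 0 < x := by
  intro x hx
  rcases (spectrum_nonneg_of_nonneg hA0 hx).lt_or_eq with h | h
  · exact h
  · exact absurd (h ▸ hx) (spectrum.zero_notMem ℝ hAu)

lemma cfc_mul3 (a : E) (f g : ℝ → ℝ) (hsa : IsSelfAdjoint a)
    (hf : ContinuousOn f (spectrum ℝ a)) (hg : ContinuousOn g (spectrum ℝ a)) :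
    cfc f a * a * cfc g a = cfc (fun t => f t * t * g t) a := by
  rw [cfc_mul (fun t => f t * t) g a (hf.mul (continuousOn_id' _)) hg,
    cfc_mul f (fun t => t) a hf (continuousOn_id' _), cfc_id' ℝ a]

lemma sqrt_facts (A : E) (hA0 : 0 ≤ A) (hAu : IsUnit A) :
    IsSelfAdjoint (cfc (fun t : ℝ => t ^ (1 / 2 : ℝ)) A) ∧
    (cfc (fun t : ℝ => t ^ (1 / 2 : ℝ)) A) * (cfc (fun t : ℝ => t ^ (-(1 / 2) : ℝ)) A) = 1 ∧
    (cfc (fun t : ℝ => t ^ (-(1 / 2) : ℝ)) A) * (cfc (fun t : ℝ => t ^ (1 / 2 : ℝ)) A) = 1 ∧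
    (cfc (fun t : ℝ => t ^ (1 / 2 : ℝ)) A) * (cfc (fun t : ℝ => t ^ (1 / 2 : ℝ)) A) = A ∧
    (cfc (fun t : ℝ => t ^ (-(1 / 2) : ℝ)) A) * A *
      (cfc (fun t : ℝ => t ^ (-(1 / 2) : ℝ)) A) = 1 := by
  have hAsa : IsSelfAdjoint A := hA0.isSelfAdjoint
  have hpos := spec_pos hA0 hAu
  have h12 := contOn_rpow hpos (1/2 : ℝ)
  have hm12 := contOn_rpow hpos (-(1/2) : ℝ)
  refine ⟨cfc_predicate _ A, ?_, ?_, ?_, ?_⟩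
  · rw [← cfc_mul _ _ A h12 hm12, ← cfc_one (R := ℝ) A]
    apply cfc_congr
    intro t ht
    have ht0 := hpos t ht
    simp only
    rw [← Real.rpow_add ht0]
    norm_num
  · rw [← cfc_mul _ _ A hm12 h12, ← cfc_one (R := ℝ) A]
    apply cfc_congr
    intro t ht
    have ht0 := hpos t ht
    simp only
    rw [← Real.rpow_add ht0]
    norm_num
  · rw [← cfc_mul _ _ A h12 h12]
    nth_rewrite 2 [← cfc_id' ℝ A]
    apply cfc_congr
    intro t ht
    have ht0 := hpos t ht
    simp only
    rw [← Real.rpow_add ht0]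
    norm_num
  · rw [cfc_mul3 A _ _ hAsa hm12 hm12, ← cfc_one (R := ℝ) A]
    apply cfc_congr
    intro t ht
    have ht0 := hpos t ht
    simp only
    calc t ^ (-(1/2):ℝ) * t * t ^ (-(1/2):ℝ)
        = t ^ (-(1/2):ℝ) * t ^ (1:ℝ) * t ^ (-(1/2):ℝ) := by rw [Real.rpow_one]
      _ = t ^ ((-(1/2)) + 1 + (-(1/2)) : ℝ) := by rw [Real.rpow_add ht0, Real.rpow_add ht0]
      _ = 1 := by norm_num

lemma X_facts (A B : E) (hA0 : 0 ≤ A) (hAu : IsUnit A) (hB0 : 0 ≤ B)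
    (m M : ℝ) (hm : 0 < m) (hmM : m < M) (hmA : m • A ≤ B) (hBM : B ≤ M • A) :
    IsSelfAdjoint (cfc (fun t : ℝ => t ^ (-(1 / 2) : ℝ)) A * B *
      cfc (fun t : ℝ => t ^ (-(1 / 2) : ℝ)) A) ∧
    spectrum ℝ (cfc (fun t : ℝ => t ^ (-(1 / 2) : ℝ)) A * B *
      cfc (fun t : ℝ => t ^ (-(1 / 2) : ℝ)) A) ⊆ Set.Icc m M := by
  obtain ⟨hsa12, h1, h2, h3, h4⟩ := sqrt_facts A hA0 hAu
  set Ah := cfc (fun t : ℝ => t ^ (-(1 / 2) : ℝ)) A with hAh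
  have hAhsa : IsSelfAdjoint Ah := cfc_predicate _ A
  set X := Ah * B * Ah with hX
  have hXsa : IsSelfAdjoint X := by
    rw [hX, IsSelfAdjoint, star_mul, star_mul, hAhsa.star_eq, hB0.isSelfAdjoint.star_eq,
      mul_assoc]
  have hconj : ∀ r : ℝ, Ah * (r • A) * Ah = r • (1 : E) := by
    intro r
    rw [mul_smul_comm, smul_mul_assoc, h4]
  have hlow : m • (1 : E) ≤ X := by
    have hc := star_left_conjugate_nonneg (sub_nonneg.mpr hmA) Ah
    rw [hAhsa.star_eq, mul_sub, sub_mul, hconj m] at hc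
    rw [← sub_nonneg]
    exact hc
  have hhigh : X ≤ M • (1 : E) := by
    have hc := star_left_conjugate_nonneg (sub_nonneg.mpr hBM) Ah
    rw [hAhsa.star_eq, mul_sub, sub_mul, hconj M] at hc
    rw [← sub_nonneg]
    exact hc
  refine ⟨hXsa, fun x hx => ?_⟩
  constructor
  · have := (algebraMap_le_iff_le_spectrum (r := m) (a := X) hXsa).mp ?_ x hx
    · exact this
    · rwa [Algebra.algebraMap_eq_smul_one]
  · have := (le_algebraMap_iff_spectrum_le (r := M) (a := X) hXsa).mp ?_ x hx
    · exact this
    · rwa [Algebra.algebraMap_eq_smul_one]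

lemma conj_le (A B : E) (hA0 : 0 ≤ A) (hAu : IsUnit A) (hB0 : 0 ≤ B)
    (m M : ℝ) (hm : 0 < m) (hmM : m < M) (hmA : m • A ≤ B) (hBM : B ≤ M • A)
    (f g : ℝ → ℝ) (hf : ContinuousOn f (Set.Icc m M)) (hg : ContinuousOn g (Set.Icc m M))
    (hfg : ∀ t ∈ Set.Icc m M, f t ≤ g t) :
    cfc (fun t : ℝ => t ^ (1 / 2 : ℝ)) A *
      cfc f (cfc (fun t : ℝ => t ^ (-(1 / 2) : ℝ)) A * B *
        cfc (fun t : ℝ => t ^ (-(1 / 2) : ℝ)) A) *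
      cfc (fun t : ℝ => t ^ (1 / 2 : ℝ)) A ≤
    cfc (fun t : ℝ => t ^ (1 / 2 : ℝ)) A *
      cfc g (cfc (fun t : ℝ => t ^ (-(1 / 2) : ℝ)) A * B *
        cfc (fun t : ℝ => t ^ (-(1 / 2) : ℝ)) A) *
      cfc (fun t : ℝ => t ^ (1 / 2 : ℝ)) A := by
  obtain ⟨hsa12, h1, h2, h3, h4⟩ := sqrt_facts A hA0 hAu
  obtain ⟨hXsa, hXspec⟩ := X_facts A B hA0 hAu hB0 m M hm hmM hmA hBM
  set Ah := cfc (fun t : ℝ => t ^ (1 / 2 : ℝ)) A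
  set X := cfc (fun t : ℝ => t ^ (-(1 / 2) : ℝ)) A * B *
      cfc (fun t : ℝ => t ^ (-(1 / 2) : ℝ)) A
  have hcfc : cfc f X ≤ cfc g X :=
    cfc_mono (fun x hx => hfg x (hXspec hx)) (hf.mono hXspec) (hg.mono hXspec)
  have := star_left_conjugate_le_conjugate hcfc Ah
  rwa [hsa12.star_eq] at this

lemma conj_lin (A B : E) (hA0 : 0 ≤ A) (hAu : IsUnit A) (hB0 : 0 ≤ B) (μ ν : ℝ) :
    cfc (fun t : ℝ => t ^ (1 / 2 : ℝ)) A *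
      cfc (fun t : ℝ => μ * t + ν) (cfc (fun t : ℝ => t ^ (-(1 / 2) : ℝ)) A * B *
        cfc (fun t : ℝ => t ^ (-(1 / 2) : ℝ)) A) *
      cfc (fun t : ℝ => t ^ (1 / 2 : ℝ)) A = μ • B + ν • A := by
  obtain ⟨hsa12, h1, h2, h3, h4⟩ := sqrt_facts A hA0 hAu
  set Ah := cfc (fun t : ℝ => t ^ (1 / 2 : ℝ)) A with hAh
  set Am := cfc (fun t : ℝ => t ^ (-(1 / 2) : ℝ)) A with hAm
  set X := Am * B * Am with hX
  have hXsa : IsSelfAdjoint X := by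
    have hAmsa : IsSelfAdjoint Am := cfc_predicate _ A
    rw [hX, IsSelfAdjoint, star_mul, star_mul, hAmsa.star_eq, hB0.isSelfAdjoint.star_eq,
      mul_assoc]
  have hlin : cfc (fun t : ℝ => μ * t + ν) X = μ • X + ν • (1 : E) := by
    rw [cfc_add (a := X) (fun t : ℝ => μ * t) (fun _ : ℝ => ν)
      (by fun_prop) (by fun_prop), cfc_const_mul_id μ X, cfc_const ν X,
      Algebra.algebraMap_eq_smul_one]
  have hAXA : Ah * X * Ah = B := by
    rw [hX, ← mul_assoc, ← mul_assoc, h1, one_mul, mul_assoc, h2, mul_one]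
  rw [hlin, mul_add, add_mul, mul_smul_comm, smul_mul_assoc, hAXA, mul_smul_comm,
    smul_mul_assoc, mul_one, h3]

end OperatorAux

/-- The weighted geometric-type mean `A ♯_p B = A^(1/2) (A^(-1/2) B A^(-1/2))^p A^(1/2)`. -/
noncomputable def sharpPow {H : Type*} [NormedAddCommGroup H] [InnerProductSpace ℂ H]
    [CompleteSpace H] (p : ℝ) (A B : H →L[ℂ] H) : H →L[ℂ] H :=
  cfc (fun t : ℝ => t ^ (1 / 2 : ℝ)) A *
    cfc (fun t : ℝ => t ^ p) (cfc (fun t : ℝ => t ^ (-(1 / 2) : ℝ)) A * B *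
      cfc (fun t : ℝ => t ^ (-(1 / 2) : ℝ)) A) *
    cfc (fun t : ℝ => t ^ (1 / 2 : ℝ)) A

/-- Ratio-type reverse of `Φ(A) ♯_p Φ(B) ≤ Φ(A ♯_p B)` for `p ≤ 0`. -/
theorem stmt_15 {H K : Type*}
    [NormedAddCommGroup H] [InnerProductSpace ℂ H] [CompleteSpace H]
    [NormedAddCommGroup K] [InnerProductSpace ℂ K] [CompleteSpace K]
    (Φ : (H →L[ℂ] H) →ₗ[ℂ] (K →L[ℂ] K))
    (hΦpos : ∀ T : H →L[ℂ] H, 0 ≤ T → 0 ≤ Φ T) (hΦunital : Φ 1 = 1)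
    (A B : H →L[ℂ] H) (hA0 : 0 ≤ A) (hAu : IsUnit A) (hB0 : 0 ≤ B) (hBu : IsUnit B)
    (m M : ℝ) (hm : 0 < m) (hmM : m < M)
    (hmA : m • A ≤ B) (hBM : B ≤ M • A)
    (p : ℝ) (hp : p ≤ 0) (Kc : ℝ)
    (hK : Kc = (m * M ^ p - M * m ^ p) / ((p - 1) * (M - m)) *
      (((p - 1) / p) * (M ^ p - m ^ p) / (m * M ^ p - M * m ^ p)) ^ p) :
    Φ (sharpPow p A B) ≤
      Φ (cfc (fun t : ℝ => t ^ (1 / 2 : ℝ)) A *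
        cfc (fun t : ℝ => Real.exp (((M - t) / (M - m)) * Real.log (m ^ p) +
            ((t - m) / (M - m)) * Real.log (M ^ p)))
          (cfc (fun t : ℝ => t ^ (-(1 / 2) : ℝ)) A * B *
            cfc (fun t : ℝ => t ^ (-(1 / 2) : ℝ)) A) *
        cfc (fun t : ℝ => t ^ (1 / 2 : ℝ)) A) ∧
    Φ (cfc (fun t : ℝ => t ^ (1 / 2 : ℝ)) A *
        cfc (fun t : ℝ => Real.exp (((M - t) / (M - m)) * Real.log (m ^ p) +
            ((t - m) / (M - m)) * Real.log (M ^ p)))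
          (cfc (fun t : ℝ => t ^ (-(1 / 2) : ℝ)) A * B *
            cfc (fun t : ℝ => t ^ (-(1 / 2) : ℝ)) A) *
        cfc (fun t : ℝ => t ^ (1 / 2 : ℝ)) A) ≤
      Kc • sharpPow p (Φ A) (Φ B) := by
  by_cases htriv : Subsingleton (K →L[ℂ] K)
  · exact ⟨le_of_eq (Subsingleton.elim _ _), le_of_eq (Subsingleton.elim _ _)⟩
  have hKnt : Nontrivial (K →L[ℂ] K) := not_subsingleton_iff_nontrivial.mp htriv
  have hHnt : Nontrivial (H →L[ℂ] H) := by
    by_contra h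
    have hs : Subsingleton (H →L[ℂ] H) := not_nontrivial_iff_subsingleton.mp h
    have h10 : (1 : H →L[ℂ] H) = 0 := Subsingleton.elim _ _
    have : (1 : K →L[ℂ] K) = 0 := by rw [← hΦunital, h10, map_zero]
    exact one_ne_zero this
  have hΦmono : ∀ C D : H →L[ℂ] H, C ≤ D → Φ C ≤ Φ D := by
    intro C D h
    have h0 := hΦpos (D - C) (sub_nonneg.mpr h)
    rw [map_sub] at h0
    exact sub_nonneg.mp h0
  obtain ⟨μ, ν, hscalar⟩ := scalar_key hm hmM hp hK
  have hIccpos : ∀ x ∈ Set.Icc m M, 0 < x := fun x hx => lt_of_lt_of_le hm hx.1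
  have hfp : ContinuousOn (fun t : ℝ => t ^ p) (Set.Icc m M) := contOn_rpow hIccpos p
  have hMm0 : M - m ≠ 0 := by
    have : (0:ℝ) < M - m := by linarith
    exact this.ne'
  have hgexp : ContinuousOn (fun t : ℝ => Real.exp (((M - t) / (M - m)) * Real.log (m ^ p) +
      ((t - m) / (M - m)) * Real.log (M ^ p))) (Set.Icc m M) := by fun_prop
  have hlinc : ContinuousOn (fun t : ℝ => μ * t + ν) (Set.Icc m M) := by fun_prop
  have hkc : ContinuousOn (fun t : ℝ => Kc * t ^ p) (Set.Icc m M) :=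
    continuousOn_const.mul hfp
  constructor
  · -- first inequality
    apply hΦmono
    exact conj_le A B hA0 hAu hB0 m M hm hmM hmA hBM _ _ hfp hgexp
      (fun t ht => (hscalar t ht).1)
  · -- second inequality
    have hP0 : 0 ≤ Φ A := hΦpos A hA0
    have hQ0 : 0 ≤ Φ B := hΦpos B hB0
    have hmP : m • Φ A ≤ Φ B := by
      have := hΦmono _ _ hmA
      rwa [Φ.map_smul_of_tower] at this
    have hPM : Φ B ≤ M • Φ A := by
      have := hΦmono _ _ hBM
      rwa [Φ.map_smul_of_tower] at this
    have hPu : IsUnit (Φ A) := by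
      obtain ⟨ε, hε0, hεA⟩ := (CFC.exists_pos_algebraMap_le_iff
        (a := A) hA0.isSelfAdjoint).mpr (spec_pos hA0 hAu)
      have hεP : algebraMap ℝ (K →L[ℂ] K) ε ≤ Φ A := by
        have := hΦmono _ _ hεA
        rwa [Algebra.algebraMap_eq_smul_one, Φ.map_smul_of_tower, hΦunital,
          ← Algebra.algebraMap_eq_smul_one] at this
      have hspec : ∀ x ∈ spectrum ℝ (Φ A), ε ≤ x :=
        (algebraMap_le_iff_le_spectrum (a := Φ A) hP0.isSelfAdjoint).mp hεP
      apply spectrum.isUnit_of_zero_notMem (R := ℝ)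
      intro h0
      linarith [hspec 0 h0]
    obtain ⟨hYsa, hYspec⟩ := X_facts (Φ A) (Φ B) hP0 hPu hQ0 m M hm hmM hmP hPM
    calc Φ (cfc (fun t : ℝ => t ^ (1 / 2 : ℝ)) A *
        cfc (fun t : ℝ => Real.exp (((M - t) / (M - m)) * Real.log (m ^ p) +
            ((t - m) / (M - m)) * Real.log (M ^ p)))
          (cfc (fun t : ℝ => t ^ (-(1 / 2) : ℝ)) A * B *
            cfc (fun t : ℝ => t ^ (-(1 / 2) : ℝ)) A) *
        cfc (fun t : ℝ => t ^ (1 / 2 : ℝ)) A)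
        ≤ Φ (μ • B + ν • A) := by
          apply hΦmono
          rw [← conj_lin A B hA0 hAu hB0 μ ν]
          exact conj_le A B hA0 hAu hB0 m M hm hmM hmA hBM _ _ hgexp hlinc
            (fun t ht => (hscalar t ht).2.1)
      _ = μ • Φ B + ν • Φ A := by
          rw [map_add, Φ.map_smul_of_tower, Φ.map_smul_of_tower]
      _ = cfc (fun t : ℝ => t ^ (1 / 2 : ℝ)) (Φ A) *
            cfc (fun t : ℝ => μ * t + ν) (cfc (fun t : ℝ => t ^ (-(1 / 2) : ℝ)) (Φ A) * Φ B *
              cfc (fun t : ℝ => t ^ (-(1 / 2) : ℝ)) (Φ A)) *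
            cfc (fun t : ℝ => t ^ (1 / 2 : ℝ)) (Φ A) :=
          (conj_lin (Φ A) (Φ B) hP0 hPu hQ0 μ ν).symm
      _ ≤ cfc (fun t : ℝ => t ^ (1 / 2 : ℝ)) (Φ A) *
            cfc (fun t : ℝ => Kc * t ^ p) (cfc (fun t : ℝ => t ^ (-(1 / 2) : ℝ)) (Φ A) * Φ B *
              cfc (fun t : ℝ => t ^ (-(1 / 2) : ℝ)) (Φ A)) *
            cfc (fun t : ℝ => t ^ (1 / 2 : ℝ)) (Φ A) :=
          conj_le (Φ A) (Φ B) hP0 hPu hQ0 m M hm hmM hmP hPM _ _ hlinc hkc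
            (fun t ht => (hscalar t ht).2.2)
      _ = Kc • sharpPow p (Φ A) (Φ B) := by
          rw [cfc_const_mul Kc (fun t : ℝ => t ^ p) _ (hfp.mono hYspec)]
          rw [mul_smul_comm, smul_mul_assoc]
          rfl
end

section
/- Let Φ be a unital positive linear map, and A, B strictly positive operators with mA ≤ B ≤ MA for 0 < m < M, and p ∈ [-1,0). Then Φ(T_p(A|B)) ≥ T_p(Φ(A)|Φ(B)) - ((1 - K(m,M,p))/p)·(Φ(A) ♯_p Φ(B)), where T_p(A|B) = (A ♯_p B - A)/p is the Tsallis relative operator entropy and K(m,M,p) is the generalized Kantorovich constant. -/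
open Real

lemma bernoulli_neg {s p : ℝ} (hs : -1 < s) (hp1 : -1 ≤ p) (hp0 : p < 0) :
    1 + p * s ≤ (1 + s) ^ p := by
  have h1 : (0:ℝ) < 1 + s := by linarith
  have h2 : (1 + s) ^ (-p) ≤ 1 + (-p) * s :=
    rpow_one_add_le_one_add_mul_self hs.le (by linarith) (by linarith)
  have h3 : 0 < (1 + s) ^ (-p) := rpow_pos_of_pos h1 _
  have h4 : (1 + s) ^ p = ((1 + s) ^ (-p))⁻¹ := by
    rw [← Real.rpow_neg h1.le, neg_neg]
  rw [h4]
  rcases le_or_gt (1 + p * s) 0 with hc | hc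
  · exact hc.trans (inv_nonneg.2 h3.le)
  · rw [← one_div, le_div_iff₀ h3]
    nlinarith [sq_nonneg (p * s)]

lemma tangent_rpow_s17 {x y p : ℝ} (hx : 0 < x) (hy : 0 < y) (hp1 : -1 ≤ p) (hp0 : p < 0) :
    y ^ p + p * y ^ (p - 1) * (x - y) ≤ x ^ p := by
  have hs : -1 < x / y - 1 := by
    have : 0 < x / y := div_pos hx hy
    linarith
  have hb := bernoulli_neg hs hp1 hp0
  rw [show 1 + (x / y - 1) = x / y by ring] at hb
  have hdiv : (x / y) ^ p = x ^ p / y ^ p := Real.div_rpow hx.le hy.le p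
  have hyp : 0 < y ^ p := rpow_pos_of_pos hy p
  have h5 : y ^ (p - 1) = y ^ p / y := by
    rw [Real.rpow_sub hy, Real.rpow_one]
  have key := mul_le_mul_of_nonneg_left hb hyp.le
  rw [hdiv] at key
  have : y ^ p * (x ^ p / y ^ p) = x ^ p := by field_simp
  rw [this] at key
  rw [h5]
  have hyne : y ≠ 0 := hy.ne'
  calc y ^ p + p * (y ^ p / y) * (x - y)
      = y ^ p * (1 + p * (x / y - 1)) := by field_simp
    _ ≤ x ^ p := key


lemma scalar_chord {m M p t : ℝ} (hm : 0 < m) (hmM : m < M) (hp1 : -1 ≤ p) (hp0 : p < 0)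
    (htm : m ≤ t) (htM : t ≤ M) :
    t ^ p ≤ ((M ^ p - m ^ p) / (M - m)) * t + (M * m ^ p - m * M ^ p) / (M - m) := by
  have hMm : (0:ℝ) < M - m := by linarith
  have ht0 : 0 < t := lt_of_lt_of_le hm htm
  have h1 := tangent_rpow_s17 hm ht0 hp1 hp0
  have h2 := tangent_rpow_s17 (hm.trans hmM) ht0 hp1 hp0
  have k1 := mul_le_mul_of_nonneg_left h1 (sub_nonneg.2 htM)
  have k2 := mul_le_mul_of_nonneg_left h2 (sub_nonneg.2 htm)
  rw [div_mul_eq_mul_div, ← add_div, le_div_iff₀ hMm]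
  nlinarith [k1, k2]

lemma scalar_tangent_line {m M p Kc t : ℝ} (hm : 0 < m) (hmM : m < M) (hp1 : -1 ≤ p) (hp0 : p < 0)
    (hK : Kc = (m * M ^ p - M * m ^ p) / ((p - 1) * (M - m)) *
      (((p - 1) / p) * (M ^ p - m ^ p) / (m * M ^ p - M * m ^ p)) ^ p)
    (ht : 0 < t) :
    ((M ^ p - m ^ p) / (M - m)) * t + (M * m ^ p - m * M ^ p) / (M - m) ≤ Kc * t ^ p := by
  have hMm : (0:ℝ) < M - m := by linarith
  have hmp : 0 < m ^ p := Real.rpow_pos_of_pos hm p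
  have hMp : 0 < M ^ p := Real.rpow_pos_of_pos (hm.trans hmM) p
  have hanti : M ^ p < m ^ p := Real.rpow_lt_rpow_of_neg hm hmM hp0
  have hN1 : M ^ p - m ^ p < 0 := by linarith
  have hN2 : m * M ^ p - M * m ^ p < 0 := by nlinarith
  have hp1' : p - 1 < 0 := by linarith
  have hN1' : M ^ p - m ^ p ≠ 0 := hN1.ne
  have hN2' : m * M ^ p - M * m ^ p ≠ 0 := hN2.ne
  have hpne : p ≠ 0 := hp0.ne
  have hp1ne : p - 1 ≠ 0 := hp1'.ne
  have hMmne : M - m ≠ 0 := hMm.ne'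
  set t0 : ℝ := (p / (p - 1)) * ((m * M ^ p - M * m ^ p) / (M ^ p - m ^ p)) with ht0def
  have ht0 : 0 < t0 := by
    apply mul_pos
    · exact div_pos_of_neg_of_neg hp0 hp1'
    · exact div_pos_of_neg_of_neg hN2 hN1
  have ht0p : 0 < t0 ^ p := Real.rpow_pos_of_pos ht0 p
  have hinv : ((p - 1) / p) * (M ^ p - m ^ p) / (m * M ^ p - M * m ^ p) = t0⁻¹ := by
    rw [ht0def]
    field_simp
  have hKc : Kc * t0 ^ p = (m * M ^ p - M * m ^ p) / ((p - 1) * (M - m)) := by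
    rw [hK, hinv, Real.inv_rpow ht0.le]
    field_simp
  have hKpos : 0 < Kc := by
    have hc0 : 0 < (m * M ^ p - M * m ^ p) / ((p - 1) * (M - m)) :=
      div_pos_of_neg_of_neg hN2 (mul_neg_of_neg_of_pos hp1' hMm)
    nlinarith [ht0p, hKc, hc0]
  have htan := tangent_rpow_s17 ht ht0 hp1 hp0
  have hmul := mul_le_mul_of_nonneg_left htan hKpos.le
  have ht0p1 : t0 ^ (p - 1) = t0 ^ p / t0 := by rw [Real.rpow_sub ht0, Real.rpow_one]
  have e1 : p * ((m * M ^ p - M * m ^ p) / ((p - 1) * (M - m))) / t0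
      = (M ^ p - m ^ p) / (M - m) := by
    rw [div_eq_iff ht0.ne', ht0def]
    field_simp
  have e3 : (M ^ p - m ^ p) / (M - m) * t0
      = p * ((m * M ^ p - M * m ^ p) / ((p - 1) * (M - m))) := by
    rw [← e1, div_mul_cancel₀ _ ht0.ne']
  have hβ : (m * M ^ p - M * m ^ p) / ((p - 1) * (M - m)) * (1 - p)
      = (M * m ^ p - m * M ^ p) / (M - m) := by
    field_simp
    ring
  have hactual : ((M ^ p - m ^ p) / (M - m)) * t + (M * m ^ p - m * M ^ p) / (M - m)
      = Kc * (t0 ^ p + p * t0 ^ (p - 1) * (t - t0)) := by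
    have expand : Kc * (t0 ^ p + p * t0 ^ (p - 1) * (t - t0))
        = (Kc * t0 ^ p) + p * (Kc * t0 ^ p) / t0 * (t - t0) := by
      rw [ht0p1]; ring
    rw [expand, hKc, e1]
    linear_combination e3 - hβ
  rw [hactual]
  exact hmul

/-- The Tsallis relative operator entropy `T_p(A|B) = (A ♯_p B - A) / p`. -/
noncomputable def tsallis {H : Type*} [NormedAddCommGroup H] [InnerProductSpace ℂ H]
    [CompleteSpace H] (p : ℝ) (A B : H →L[ℂ] H) : H →L[ℂ] H :=
  p⁻¹ • (sharpPow p A B - A)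

section Operator

variable {H : Type*} [NormedAddCommGroup H] [InnerProductSpace ℂ H] [CompleteSpace H]

set_option synthInstance.maxHeartbeats 1000000 in
instance stmt17_posSMulMono : PosSMulMono ℝ (H →L[ℂ] H) := inferInstance

lemma stmt17_spec_pos {a : H →L[ℂ] H} (ha : 0 ≤ a) (hu : IsUnit a) :
    spectrum ℝ a ⊆ Set.Ioi 0 := by
  intro x hx
  have h1 : 0 ≤ x := spectrum_nonneg_of_nonneg ha hx
  have h2 : x ≠ 0 := by
    rintro rfl
    exact (spectrum.zero_mem_iff ℝ).mp hx hu
  exact lt_of_le_of_ne h1 (Ne.symm h2)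

lemma stmt17_contOn_rpow {s : Set ℝ} (q : ℝ) (hs : s ⊆ Set.Ioi 0) :
    ContinuousOn (fun t : ℝ => t ^ q) s := fun x hx =>
  (Real.continuousAt_rpow_const x q (Or.inl (ne_of_gt (hs hx)))).continuousWithinAt

lemma stmt17_sqrt_facts {a : H →L[ℂ] H} (ha : 0 ≤ a) (hu : IsUnit a) :
    cfc (fun t : ℝ => t ^ (1 / 2 : ℝ)) a * cfc (fun t : ℝ => t ^ (-(1 / 2) : ℝ)) a = 1 ∧
    cfc (fun t : ℝ => t ^ (-(1 / 2) : ℝ)) a * cfc (fun t : ℝ => t ^ (1 / 2 : ℝ)) a = 1 ∧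
    cfc (fun t : ℝ => t ^ (1 / 2 : ℝ)) a * cfc (fun t : ℝ => t ^ (1 / 2 : ℝ)) a = a ∧
    cfc (fun t : ℝ => t ^ (-(1 / 2) : ℝ)) a * a * cfc (fun t : ℝ => t ^ (-(1 / 2) : ℝ)) a = 1 := by
  have hσ := stmt17_spec_pos ha hu
  have hsa : IsSelfAdjoint a := .of_nonneg ha
  have hcont : ∀ q : ℝ, ContinuousOn (fun t : ℝ => t ^ q) (spectrum ℝ a) :=
    fun q => stmt17_contOn_rpow q hσ
  have key : ∀ q r w : ℝ, q + r = w →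
      cfc (fun t : ℝ => t ^ q) a * cfc (fun t : ℝ => t ^ r) a = cfc (fun t : ℝ => t ^ w) a := by
    intro q r w hw
    rw [← cfc_mul _ _ a (hcont q) (hcont r)]
    exact cfc_congr fun x hx => by
      rw [← Real.rpow_add (hσ hx), hw]
  have hone : cfc (fun t : ℝ => t ^ (0:ℝ)) a = 1 := by
    have : cfc (fun t : ℝ => t ^ (0:ℝ)) a = cfc (fun _ : ℝ => (1:ℝ)) a :=
      cfc_congr fun x _ => Real.rpow_zero x
    rw [this, cfc_const 1 a, map_one]
  have hid : cfc (fun t : ℝ => t ^ (1:ℝ)) a = a := by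
    have : cfc (fun t : ℝ => t ^ (1:ℝ)) a = cfc (fun x : ℝ => x) a :=
      cfc_congr fun x _ => Real.rpow_one x
    rw [this, cfc_id' ℝ a]
  have h1 := key (1/2) (-(1/2)) 0 (by norm_num)
  have h2 := key (-(1/2)) (1/2) 0 (by norm_num)
  have h3 := key (1/2) (1/2) 1 (by norm_num)
  rw [hone] at h1 h2
  rw [hid] at h3
  refine ⟨h1, h2, h3, ?_⟩
  calc cfc (fun t : ℝ => t ^ (-(1 / 2) : ℝ)) a * a * cfc (fun t : ℝ => t ^ (-(1 / 2) : ℝ)) a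
      = cfc (fun t : ℝ => t ^ (-(1 / 2) : ℝ)) a *
          (cfc (fun t : ℝ => t ^ (1/2 : ℝ)) a * cfc (fun t : ℝ => t ^ (1/2 : ℝ)) a) *
          cfc (fun t : ℝ => t ^ (-(1 / 2) : ℝ)) a := by rw [h3]
    _ = 1 := by
        simp only [← mul_assoc]
        rw [h2, one_mul, h1]

lemma stmt17_sharp_le_lin (A B : H →L[ℂ] H) (hA0 : 0 ≤ A) (hAu : IsUnit A) (hB0 : 0 ≤ B)
    (m M p : ℝ) (hm : 0 < m) (hmM : m < M) (hmA : m • A ≤ B) (hBM : B ≤ M • A)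
    (hp1 : -1 ≤ p) (hp0 : p < 0) :
    sharpPow p A B ≤ ((M ^ p - m ^ p) / (M - m)) • B + ((M * m ^ p - m * M ^ p) / (M - m)) • A := by
  obtain ⟨hsi, his, hss, hiai⟩ := stmt17_sqrt_facts hA0 hAu
  set s : H →L[ℂ] H := cfc (fun t : ℝ => t ^ (1 / 2 : ℝ)) A with hs_def
  set i : H →L[ℂ] H := cfc (fun t : ℝ => t ^ (-(1 / 2) : ℝ)) A with hi_def
  have hs_sa : IsSelfAdjoint s := cfc_predicate _ A
  have hi_sa : IsSelfAdjoint i := cfc_predicate _ A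
  set C : H →L[ℂ] H := i * B * i with hC_def
  have hC0 : 0 ≤ C := by
    have := star_left_conjugate_nonneg hB0 i
    rwa [hi_sa.star_eq] at this
  have hC_sa : IsSelfAdjoint C := .of_nonneg hC0
  have hmC : m • (1 : H →L[ℂ] H) ≤ C := by
    have h := star_left_conjugate_le_conjugate hmA i
    rw [hi_sa.star_eq, mul_smul_comm, smul_mul_assoc, hiai] at h
    exact h
  have hCM : C ≤ M • (1 : H →L[ℂ] H) := by
    have h := star_left_conjugate_le_conjugate hBM i
    rw [hi_sa.star_eq, mul_smul_comm, smul_mul_assoc, hiai] at h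
    exact h
  have hspec : spectrum ℝ C ⊆ Set.Icc m M := by
    intro x hx
    constructor
    · exact (algebraMap_le_iff_le_spectrum hC_sa).mp
        (by rwa [Algebra.algebraMap_eq_smul_one]) x hx
    · exact (le_algebraMap_iff_spectrum_le hC_sa).mp
        (by rwa [Algebra.algebraMap_eq_smul_one]) x hx
  have hspec' : spectrum ℝ C ⊆ Set.Ioi 0 := fun x hx => lt_of_lt_of_le hm (hspec hx).1
  have key : cfc (fun t : ℝ => t ^ p) C ≤
      cfc (fun t : ℝ => ((M ^ p - m ^ p) / (M - m)) * t + (M * m ^ p - m * M ^ p) / (M - m)) C := by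
    rw [cfc_le_iff _ _ C (stmt17_contOn_rpow p hspec') (by fun_prop) hC_sa]
    intro x hx
    exact scalar_chord hm hmM hp1 hp0 (hspec hx).1 (hspec hx).2
  have hlin : cfc (fun t : ℝ => ((M ^ p - m ^ p) / (M - m)) * t +
        (M * m ^ p - m * M ^ p) / (M - m)) C
      = ((M ^ p - m ^ p) / (M - m)) • C +
        ((M * m ^ p - m * M ^ p) / (M - m)) • (1 : H →L[ℂ] H) := by
    rw [cfc_add C _ _ (by fun_prop) (by fun_prop), cfc_const_mul_id _ C hC_sa,
      cfc_const _ C hC_sa, Algebra.algebraMap_eq_smul_one]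
  have hconj := star_left_conjugate_le_conjugate key s
  rw [hs_sa.star_eq, hlin] at hconj
  have hL : s * cfc (fun t : ℝ => t ^ p) C * s = sharpPow p A B := rfl
  have hR : s * (((M ^ p - m ^ p) / (M - m)) • C +
        ((M * m ^ p - m * M ^ p) / (M - m)) • (1 : H →L[ℂ] H)) * s
      = ((M ^ p - m ^ p) / (M - m)) • B + ((M * m ^ p - m * M ^ p) / (M - m)) • A := by
    have hsCs : s * C * s = B := by
      rw [hC_def]
      simp only [← mul_assoc]
      rw [hsi, one_mul, mul_assoc, his, mul_one]
    rw [mul_add, add_mul, mul_smul_comm, smul_mul_assoc, mul_smul_comm, smul_mul_assoc,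
      hsCs, mul_one, hss]
  rw [hL, hR] at hconj
  exact hconj

lemma stmt17_lin_le_sharp (A B : H →L[ℂ] H) (hA0 : 0 ≤ A) (hAu : IsUnit A) (hB0 : 0 ≤ B)
    (m M p Kc : ℝ) (hm : 0 < m) (hmM : m < M) (hmA : m • A ≤ B)
    (hp1 : -1 ≤ p) (hp0 : p < 0)
    (hK : Kc = (m * M ^ p - M * m ^ p) / ((p - 1) * (M - m)) *
      (((p - 1) / p) * (M ^ p - m ^ p) / (m * M ^ p - M * m ^ p)) ^ p) :
    ((M ^ p - m ^ p) / (M - m)) • B + ((M * m ^ p - m * M ^ p) / (M - m)) • A ≤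
      Kc • sharpPow p A B := by
  obtain ⟨hsi, his, hss, hiai⟩ := stmt17_sqrt_facts hA0 hAu
  set s : H →L[ℂ] H := cfc (fun t : ℝ => t ^ (1 / 2 : ℝ)) A with hs_def
  set i : H →L[ℂ] H := cfc (fun t : ℝ => t ^ (-(1 / 2) : ℝ)) A with hi_def
  have hs_sa : IsSelfAdjoint s := cfc_predicate _ A
  have hi_sa : IsSelfAdjoint i := cfc_predicate _ A
  set C : H →L[ℂ] H := i * B * i with hC_def
  have hC0 : 0 ≤ C := by
    have := star_left_conjugate_nonneg hB0 i
    rwa [hi_sa.star_eq] at this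
  have hC_sa : IsSelfAdjoint C := .of_nonneg hC0
  have hmC : m • (1 : H →L[ℂ] H) ≤ C := by
    have h := star_left_conjugate_le_conjugate hmA i
    rw [hi_sa.star_eq, mul_smul_comm, smul_mul_assoc, hiai] at h
    exact h
  have hspec' : spectrum ℝ C ⊆ Set.Ioi 0 := by
    intro x hx
    have := (algebraMap_le_iff_le_spectrum hC_sa).mp
      (by rwa [Algebra.algebraMap_eq_smul_one]) x hx
    exact lt_of_lt_of_le hm this
  have key : cfc (fun t : ℝ => ((M ^ p - m ^ p) / (M - m)) * t +
        (M * m ^ p - m * M ^ p) / (M - m)) C ≤ cfc (fun t : ℝ => Kc * t ^ p) C := by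
    rw [cfc_le_iff (fun t : ℝ => ((M ^ p - m ^ p) / (M - m)) * t +
        (M * m ^ p - m * M ^ p) / (M - m)) (fun t : ℝ => Kc * t ^ p) C (by fun_prop)
      (continuousOn_const.mul (stmt17_contOn_rpow p hspec')) hC_sa]
    intro x hx
    exact scalar_tangent_line hm hmM hp1 hp0 hK (hspec' hx)
  have hlin : cfc (fun t : ℝ => ((M ^ p - m ^ p) / (M - m)) * t +
        (M * m ^ p - m * M ^ p) / (M - m)) C
      = ((M ^ p - m ^ p) / (M - m)) • C +
        ((M * m ^ p - m * M ^ p) / (M - m)) • (1 : H →L[ℂ] H) := by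
    rw [cfc_add C _ _ (by fun_prop) (by fun_prop), cfc_const_mul_id _ C hC_sa,
      cfc_const _ C hC_sa, Algebra.algebraMap_eq_smul_one]
  have hmulK : cfc (fun t : ℝ => Kc * t ^ p) C = Kc • cfc (fun t : ℝ => t ^ p) C :=
    cfc_const_mul Kc _ C (stmt17_contOn_rpow p hspec')
  have hconj := star_left_conjugate_le_conjugate key s
  rw [hs_sa.star_eq, hlin, hmulK] at hconj
  have hL : s * (((M ^ p - m ^ p) / (M - m)) • C +
        ((M * m ^ p - m * M ^ p) / (M - m)) • (1 : H →L[ℂ] H)) * s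
      = ((M ^ p - m ^ p) / (M - m)) • B + ((M * m ^ p - m * M ^ p) / (M - m)) • A := by
    have hsCs : s * C * s = B := by
      rw [hC_def]
      simp only [← mul_assoc]
      rw [hsi, one_mul, mul_assoc, his, mul_one]
    rw [mul_add, add_mul, mul_smul_comm, smul_mul_assoc, mul_smul_comm, smul_mul_assoc,
      hsCs, mul_one, hss]
  have hR : s * (Kc • cfc (fun t : ℝ => t ^ p) C) * s = Kc • sharpPow p A B := by
    rw [mul_smul_comm, smul_mul_assoc]
    rfl
  rw [hL, hR] at hconj
  exact hconj

end Operator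

/-- Ratio-type complement for the Tsallis relative operator entropy. -/
theorem stmt_17 {H K : Type*}
    [NormedAddCommGroup H] [InnerProductSpace ℂ H] [CompleteSpace H]
    [NormedAddCommGroup K] [InnerProductSpace ℂ K] [CompleteSpace K]
    (Φ : (H →L[ℂ] H) →ₗ[ℂ] (K →L[ℂ] K))
    (hΦpos : ∀ T : H →L[ℂ] H, 0 ≤ T → 0 ≤ Φ T) (hΦunital : Φ 1 = 1)
    (A B : H →L[ℂ] H) (hA0 : 0 ≤ A) (hAu : IsUnit A) (hB0 : 0 ≤ B) (hBu : IsUnit B)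
    (m M : ℝ) (hm : 0 < m) (hmM : m < M)
    (hmA : m • A ≤ B) (hBM : B ≤ M • A)
    (p : ℝ) (hp1 : -1 ≤ p) (hp0 : p < 0) (Kc : ℝ)
    (hK : Kc = (m * M ^ p - M * m ^ p) / ((p - 1) * (M - m)) *
      (((p - 1) / p) * (M ^ p - m ^ p) / (m * M ^ p - M * m ^ p)) ^ p) :
    tsallis p (Φ A) (Φ B) - ((1 - Kc) / p) • sharpPow p (Φ A) (Φ B) ≤
      Φ (tsallis p A B) := by
  have hmono : ∀ {X Y : H →L[ℂ] H}, X ≤ Y → Φ X ≤ Φ Y := by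
    intro X Y h
    have := hΦpos _ (sub_nonneg.2 h)
    rw [map_sub] at this
    exact sub_nonneg.1 this
  have hsmulΦ : ∀ (r : ℝ) (X : H →L[ℂ] H), Φ (r • X) = r • Φ X := by
    intro r X
    rw [← algebraMap_smul ℂ r X, map_smul, algebraMap_smul]
  by_cases hKtriv : Subsingleton (K →L[ℂ] K)
  · exact le_of_eq (Subsingleton.elim _ _)
  · have hKnt : Nontrivial (K →L[ℂ] K) := not_subsingleton_iff_nontrivial.mp hKtriv
    have hHnt : Nontrivial (H →L[ℂ] H) := by
      by_contra h
      have hsub : Subsingleton (H →L[ℂ] H) := not_nontrivial_iff_subsingleton.mp h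
      exact one_ne_zero (by rw [← hΦunital, Subsingleton.elim (1 : H →L[ℂ] H) 0, map_zero])
    have hA_sa : IsSelfAdjoint A := .of_nonneg hA0
    obtain ⟨ε, hε, hεA⟩ := (CFC.exists_pos_algebraMap_le_iff (a := A) hA_sa).mpr
      (fun x hx => stmt17_spec_pos hA0 hAu hx)
    have hΦA0 : 0 ≤ Φ A := hΦpos A hA0
    have hΦB0 : 0 ≤ Φ B := hΦpos B hB0
    have hΦA_sa : IsSelfAdjoint (Φ A) := .of_nonneg hΦA0
    have hεΦA : algebraMap ℝ (K →L[ℂ] K) ε ≤ Φ A := by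
      have := hmono hεA
      rwa [Algebra.algebraMap_eq_smul_one, hsmulΦ, hΦunital,
        ← Algebra.algebraMap_eq_smul_one] at this
    have hΦAu : IsUnit (Φ A) := by
      have hspec := (algebraMap_le_iff_le_spectrum hΦA_sa).mp hεΦA
      by_contra h
      exact absurd (hspec 0 ((spectrum.zero_mem_iff ℝ).mpr h)) (by linarith)
    have hmΦ : m • Φ A ≤ Φ B := by
      have := hmono hmA
      rwa [hsmulΦ] at this
    have h1 := stmt17_sharp_le_lin A B hA0 hAu hB0 m M p hm hmM hmA hBM hp1 hp0
    have h2 : Φ (sharpPow p A B) ≤ ((M ^ p - m ^ p) / (M - m)) • Φ B +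
        ((M * m ^ p - m * M ^ p) / (M - m)) • Φ A := by
      have := hmono h1
      rwa [map_add, hsmulΦ, hsmulΦ] at this
    have h3 := stmt17_lin_le_sharp (Φ A) (Φ B) hΦA0 hΦAu hΦB0 m M p Kc hm hmM hmΦ hp1 hp0 hK
    have hfinal : Φ (sharpPow p A B) ≤ Kc • sharpPow p (Φ A) (Φ B) := h2.trans h3
    rw [← sub_nonneg]
    have hkey : Φ (tsallis p A B) -
        (tsallis p (Φ A) (Φ B) - ((1 - Kc) / p) • sharpPow p (Φ A) (Φ B))
        = (-p⁻¹) • (Kc • sharpPow p (Φ A) (Φ B) - Φ (sharpPow p A B)) := by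
      unfold tsallis
      rw [hsmulΦ, map_sub]
      have hp : p ≠ 0 := hp0.ne
      match_scalars <;> field_simp <;> ring
    rw [hkey]
    exact smul_nonneg (by rw [neg_nonneg]; exact inv_nonpos.2 hp0.le) (sub_nonneg.2 hfinal)
end
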